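/- arXiv:2505.18856 — 6 statements merged into one kernel-verified Lean document; each statement's English description precedes it below -/
import Mathlib

section
/- Let Quat_{n+1} be the group generated by elements â₁, …, â_n subject to the relations â_i² = -1 for all i, â_i â_j = â_j â_i when |i-j| ≠ 1, and â_i â_j = -â_j â_i when |i-j| = 1 (where -1 is a central element of order 2). Then Quat_{n+1} has cardinality 2^{n+1}, with elements ± â₁^{ε₁} ⋯ â_n^{ε_n} for ε_k ∈ {0,1}. -/
/-- The defining relators of `Quat_{n+1}`: generators `â_1, …, â_n` (indexed by `Fin n`,
written `Sum.inl i`) and a central element `-1` (written `Sum.inr ()`), with relations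
`(-1)² = 1`, `-1` central, `â_i² = -1`, `â_i â_j = â_j â_i` for `|i-j| ≠ 1` and
`â_i â_j = -â_j â_i` for `|i-j| = 1`. -/
def quatRels (n : ℕ) : Set (FreeGroup (Fin n ⊕ Unit)) :=
  {w | w = (FreeGroup.of (Sum.inr ()))^2} ∪
  {w | ∃ i : Fin n, w = FreeGroup.of (Sum.inr ()) * FreeGroup.of (Sum.inl i) *
      (FreeGroup.of (Sum.inr ()))⁻¹ * (FreeGroup.of (Sum.inl i))⁻¹} ∪
  {w | ∃ i : Fin n, w = (FreeGroup.of (Sum.inl i))^2 * (FreeGroup.of (Sum.inr ()))⁻¹} ∪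
  {w | ∃ i j : Fin n, (i : ℕ) + 1 ≠ (j : ℕ) ∧ (j : ℕ) + 1 ≠ (i : ℕ) ∧
      w = FreeGroup.of (Sum.inl i) * FreeGroup.of (Sum.inl j) *
        (FreeGroup.of (Sum.inl i))⁻¹ * (FreeGroup.of (Sum.inl j))⁻¹} ∪
  {w | ∃ i j : Fin n, ((i : ℕ) + 1 = (j : ℕ) ∨ (j : ℕ) + 1 = (i : ℕ)) ∧
      w = FreeGroup.of (Sum.inl i) * FreeGroup.of (Sum.inl j) *
        (FreeGroup.of (Sum.inr ()) * FreeGroup.of (Sum.inl j) * FreeGroup.of (Sum.inl i))⁻¹}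

namespace QuatAux

variable {n : ℕ}

/-- cocycle coefficient -/
def Bc (i j : Fin n) : ZMod 2 := if i = j ∨ (j:ℕ)+1 = (i:ℕ) then 1 else 0

def Bf (e f : Fin n → ZMod 2) : ZMod 2 := ∑ i, ∑ j, Bc i j * e i * f j

lemma Bf_add_left (e e' f : Fin n → ZMod 2) : Bf (e + e') f = Bf e f + Bf e' f := by
  simp [Bf, add_mul, mul_add, Finset.sum_add_distrib]

lemma Bf_add_right (e f f' : Fin n → ZMod 2) : Bf e (f + f') = Bf e f + Bf e f' := by
  simp [Bf, add_mul, mul_add, Finset.sum_add_distrib]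

lemma Bf_zero_left (f : Fin n → ZMod 2) : Bf 0 f = 0 := by simp [Bf]

lemma Bf_zero_right (e : Fin n → ZMod 2) : Bf e 0 = 0 := by simp [Bf]

lemma Bf_single (i j : Fin n) :
    Bf (Pi.single i (1:ZMod 2)) (Pi.single j 1) = Bc i j := by
  simp [Bf, Pi.single_apply]

structure Q (n : ℕ) where
  s : ZMod 2
  e : Fin n → ZMod 2

instance : Mul (Q n) := ⟨fun a b => ⟨a.s + b.s + Bf a.e b.e, a.e + b.e⟩⟩
instance : One (Q n) := ⟨⟨0, 0⟩⟩
instance : Inv (Q n) := ⟨fun a => ⟨a.s + Bf a.e a.e, a.e⟩⟩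

lemma Q.mul_def (a b : Q n) : a * b = ⟨a.s + b.s + Bf a.e b.e, a.e + b.e⟩ := rfl
lemma Q.one_def : (1 : Q n) = ⟨0, 0⟩ := rfl
lemma Q.inv_def (a : Q n) : a⁻¹ = ⟨a.s + Bf a.e a.e, a.e⟩ := rfl

instance : Group (Q n) where
  mul_assoc a b c := by
    simp only [Q.mul_def, Bf_add_left, Bf_add_right, Q.mk.injEq]
    exact ⟨by ring, add_assoc _ _ _⟩
  one_mul a := by
    simp [Q.mul_def, Q.one_def, Bf_zero_left]
  mul_one a := by
    simp [Q.mul_def, Q.one_def, Bf_zero_right]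
  inv_mul_cancel a := by
    simp only [Q.mul_def, Q.inv_def, Q.one_def, Q.mk.injEq]
    constructor
    · ring_nf
      rw [show (2:ZMod 2) = 0 from rfl]
      ring
    · funext i
      exact CharTwo.add_self_eq_zero _


/-- images of the generators -/
def gen (n : ℕ) : Fin n ⊕ Unit → Q n
  | Sum.inl i => ⟨0, Pi.single i 1⟩
  | Sum.inr _ => ⟨1, 0⟩

lemma gen_mul_gen (i j : Fin n) :
    gen n (Sum.inl i) * gen n (Sum.inl j) = ⟨Bc i j, Pi.single i 1 + Pi.single j 1⟩ := by
  simp [gen, Q.mul_def, Bf_single]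

lemma Bc_self (i : Fin n) : Bc i i = 1 := by simp [Bc]

lemma quatRels_hold (n : ℕ) :
    ∀ r ∈ quatRels n, FreeGroup.lift (gen n) r = 1 := by
  rintro r (((((h | ⟨i, h⟩) | ⟨i, h⟩) | ⟨i, j, hij, hji, h⟩) | ⟨i, j, hadj, h⟩)) <;>
      subst h <;>
      simp only [map_mul, map_inv, map_pow, FreeGroup.lift_apply_of]
  · show gen n (Sum.inr ()) ^ 2 = 1
    simp [gen, pow_two, Q.mul_def, Q.one_def, Bf_zero_left]
    rfl
  · have : gen n (Sum.inr ()) * gen n (Sum.inl i) = gen n (Sum.inl i) * gen n (Sum.inr ()) := by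
      simp [gen, Q.mul_def, Bf_zero_left, Bf_zero_right]
    rw [this]
    group
  · have h1 : gen n (Sum.inl i) ^ 2 = gen n (Sum.inr ()) := by
      rw [pow_two, gen_mul_gen, Bc_self]
      simp [gen]
      funext k
      exact CharTwo.add_self_eq_zero _
    rw [h1]
    group
  · have : gen n (Sum.inl i) * gen n (Sum.inl j) = gen n (Sum.inl j) * gen n (Sum.inl i) := by
      rw [gen_mul_gen, gen_mul_gen]
      congr 1
      · by_cases hij' : i = j
        · subst hij'; rfl
        · simp [Bc, hij', (Ne.symm hij' : j ≠ i), hij, hji]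
      · rw [add_comm]
    rw [this]
    group
  · have : gen n (Sum.inl i) * gen n (Sum.inl j) =
        gen n (Sum.inr ()) * gen n (Sum.inl j) * gen n (Sum.inl i) := by
      have hne : i ≠ j := by
        rintro rfl
        rcases hadj with h | h <;> omega
      rw [gen_mul_gen, mul_assoc, gen_mul_gen]
      simp only [gen, Q.mul_def, Bf_zero_left, zero_add, Q.mk.injEq]
      constructor
      · rcases hadj with hadj | hadj
        · have h1 : Bc i j = 0 := by simp [Bc, hne]; omega
          have h2 : Bc j i = 1 := by simp [Bc]; intro _; omega
          rw [h1, h2]; rfl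
        · have h1 : Bc i j = 1 := by simp [Bc]; intro _; omega
          have h2 : Bc j i = 0 := by simp [Bc, Ne.symm hne]; omega
          rw [h1, h2]; rfl
      · rw [add_comm]
    rw [this]
    group


/-! ### The presented group side -/

abbrev PG (n : ℕ) := PresentedGroup (quatRels n)

def z : PG n := PresentedGroup.of (Sum.inr ())
def x (i : Fin n) : PG n := PresentedGroup.of (Sum.inl i)

lemma rel_one {r : FreeGroup (Fin n ⊕ Unit)} (hr : r ∈ quatRels n) :
    PresentedGroup.mk (quatRels n) r = 1 :=
  (QuotientGroup.eq_one_iff _).mpr (Subgroup.subset_normalClosure hr)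

lemma hz2 : (z : PG n) * z = 1 := by
  have h := rel_one (n := n) (r := (FreeGroup.of (Sum.inr ()))^2)
    (Or.inl (Or.inl (Or.inl (Or.inl rfl))))
  rw [map_pow, pow_two] at h
  exact h

lemma hzx (i : Fin n) : z * x i = x i * z := by
  have h := rel_one (n := n) (r := FreeGroup.of (Sum.inr ()) * FreeGroup.of (Sum.inl i) *
      (FreeGroup.of (Sum.inr ()))⁻¹ * (FreeGroup.of (Sum.inl i))⁻¹)
    (Or.inl (Or.inl (Or.inl (Or.inr ⟨i, rfl⟩))))
  rw [map_mul, map_mul, map_mul, map_inv, map_inv] at h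
  exact commutatorElement_eq_one_iff_mul_comm.mp h

lemma hxx (i : Fin n) : x i * x i = (z : PG n) := by
  have h := rel_one (n := n)
    (r := (FreeGroup.of (Sum.inl i))^2 * (FreeGroup.of (Sum.inr ()))⁻¹)
    (Or.inl (Or.inl (Or.inr ⟨i, rfl⟩)))
  rw [map_mul, map_pow, map_inv, mul_inv_eq_one, pow_two] at h
  exact h

lemma hcomm (i j : Fin n) (hij : (i:ℕ)+1 ≠ (j:ℕ)) (hji : (j:ℕ)+1 ≠ (i:ℕ)) :
    x i * x j = x j * x i := by
  have h := rel_one (n := n)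
    (r := FreeGroup.of (Sum.inl i) * FreeGroup.of (Sum.inl j) *
        (FreeGroup.of (Sum.inl i))⁻¹ * (FreeGroup.of (Sum.inl j))⁻¹)
    (Or.inl (Or.inr ⟨i, j, hij, hji, rfl⟩))
  rw [map_mul, map_mul, map_mul, map_inv, map_inv] at h
  exact commutatorElement_eq_one_iff_mul_comm.mp h

lemma hanti (i j : Fin n) (hadj : (i:ℕ)+1 = (j:ℕ) ∨ (j:ℕ)+1 = (i:ℕ)) :
    x i * x j = z * x j * x i := by
  have h := rel_one (n := n)
    (r := FreeGroup.of (Sum.inl i) * FreeGroup.of (Sum.inl j) *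
        (FreeGroup.of (Sum.inr ()) * FreeGroup.of (Sum.inl j) * FreeGroup.of (Sum.inl i))⁻¹)
    (Or.inr ⟨i, j, hadj, rfl⟩)
  rw [map_mul, map_inv, map_mul, map_mul, map_mul, mul_inv_eq_one] at h
  exact h

lemma z_mul_comm (g : PG n) : z * g = g * z := by
  have hmem : g ∈ Subgroup.centralizer {(z : PG n)} := by
    have htop := PresentedGroup.closure_range_of (quatRels n)
    have hle : Subgroup.closure (Set.range (PresentedGroup.of :
        (Fin n ⊕ Unit) → PG n)) ≤ Subgroup.centralizer {(z : PG n)} := by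
      rw [Subgroup.closure_le]
      rintro _ ⟨a, rfl⟩
      rw [SetLike.mem_coe, Subgroup.mem_centralizer_iff]
      rintro h hh
      rw [Set.mem_singleton_iff] at hh
      subst hh
      cases a with
      | inl i => exact hzx i
      | inr u => rfl
    exact hle (htop ▸ Subgroup.mem_top g)
  rw [Subgroup.mem_centralizer_iff] at hmem
  exact hmem z rfl

lemma zinv : (z : PG n)⁻¹ = z := inv_eq_of_mul_eq_one_right hz2

lemma xinv (j : Fin n) : (x j)⁻¹ = z * x j := by
  refine inv_eq_of_mul_eq_one_right ?_
  rw [← mul_assoc, ← z_mul_comm (x j), mul_assoc, hxx, hz2]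

/-- sign powers -/
def zb (n : ℕ) (d : Bool) : PG n := if d then z else 1

lemma zb_mul (d c : Bool) : zb n d * zb n c = zb n (xor d c) := by
  cases d <;> cases c <;> simp [zb, hz2]

lemma zb_comm (d : Bool) (g : PG n) : zb n d * g = g * zb n d := by
  cases d <;> simp [zb, z_mul_comm g]

lemma zb_left (d : Bool) (g h : PG n) : g * (zb n d * h) = zb n d * (g * h) := by
  rw [← mul_assoc, ← zb_comm, mul_assoc]

/-- the letter `x i` or `1` depending on the exponent -/
def t (e : Fin n → Bool) (i : Fin n) : PG n := if e i then x i else 1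

def P (e : Fin n → Bool) (l : List (Fin n)) : PG n := (l.map (t e)).prod

lemma P_nil (e : Fin n → Bool) : P e [] = 1 := rfl

lemma P_cons (e : Fin n → Bool) (a : Fin n) (l : List (Fin n)) :
    P e (a :: l) = t e a * P e l := by simp [P]

lemma P_append (e : Fin n → Bool) (l₁ l₂ : List (Fin n)) :
    P e (l₁ ++ l₂) = P e l₁ * P e l₂ := by simp [P]

lemma P_congr {e e' : Fin n → Bool} {l : List (Fin n)} (h : ∀ i ∈ l, e i = e' i) :
    P e l = P e' l := by
  unfold P
  congr 1
  exact List.map_congr_left fun i hi => by rw [t, t, h i hi]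

lemma move (j : Fin n) (e : Fin n → Bool) :
    ∀ l : List (Fin n), (∀ i ∈ l, (j:ℕ) < (i:ℕ)) →
      ∃ d : Bool, P e l * x j = zb n d * (x j * P e l)
  | [], _ => ⟨false, by simp [P_nil, zb]⟩
  | a :: l, h => by
    obtain ⟨d, hd⟩ := move j e l (fun i hi => h i (List.mem_cons_of_mem a hi))
    have ha : (j:ℕ) < (a:ℕ) := h a List.mem_cons_self
    have key : ∃ c : Bool, t e a * x j = zb n c * (x j * t e a) := by
      by_cases hea : e a
      · by_cases hadj : (j:ℕ)+1 = (a:ℕ)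
        · refine ⟨true, ?_⟩
          rw [t, if_pos hea, hanti a j (Or.inr hadj)]
          simp [zb, mul_assoc, t, hea]
        · refine ⟨false, ?_⟩
          rw [t, if_pos hea]
          simpa [zb] using hcomm a j (by omega) (by omega)
      · exact ⟨false, by simp [t, hea, zb]⟩
    obtain ⟨c, hc⟩ := key
    refine ⟨xor c d, ?_⟩
    rw [P_cons, mul_assoc, hd, zb_left, ← mul_assoc (t e a), hc, mul_assoc, zb_left,
      ← mul_assoc, zb_mul, mul_assoc, ← P_cons]

lemma finRange_split (j : Fin n) : List.finRange n =
    (List.finRange n).take (j:ℕ) ++ j :: (List.finRange n).drop ((j:ℕ)+1) := by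
  conv_lhs => rw [← List.take_append_drop (j:ℕ) (List.finRange n)]
  rw [List.drop_eq_getElem_cons (by simp [j.isLt])]
  simp [List.getElem_finRange]

lemma mem_take_lt {k : ℕ} {i : Fin n} (h : i ∈ (List.finRange n).take k) : (i:ℕ) < k := by
  rw [List.mem_take_iff_getElem] at h
  obtain ⟨m, hm, rfl⟩ := h
  simp [List.getElem_finRange]
  omega

lemma mem_drop_le {k : ℕ} {i : Fin n} (h : i ∈ (List.finRange n).drop k) : k ≤ (i:ℕ) := by
  rw [List.mem_drop_iff_getElem] at h
  obtain ⟨m, hm, rfl⟩ := h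
  simp [List.getElem_finRange]

lemma step_x (s : Bool) (e : Fin n → Bool) (j : Fin n) :
    ∃ (s' : Bool) (e' : Fin n → Bool),
      (zb n s * P e (List.finRange n)) * x j = zb n s' * P e' (List.finRange n) := by
  set e' : Fin n → Bool := Function.update e j (!(e j)) with he'
  set l₁ := (List.finRange n).take (j:ℕ)
  set l₂ := (List.finRange n).drop ((j:ℕ)+1)
  have hsplit := finRange_split j
  have h₁ : ∀ i ∈ l₁, e i = e' i := fun i hi => by
    rw [he', Function.update_of_ne]
    exact fun hij => by have := mem_take_lt hi; omega
  have h₂ : ∀ i ∈ l₂, e i = e' i := fun i hi => by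
    rw [he', Function.update_of_ne]
    exact fun hij => by have := mem_drop_le hi; omega
  obtain ⟨d, hd⟩ := move j e l₂ (fun i hi => by have := mem_drop_le hi; omega)
  have htj : t e j * x j = zb n (e j) * t e' j := by
    cases hej : e j
    · simp [t, he', hej, zb]
    · simp [t, he', hej, zb, hxx]
  refine ⟨xor (xor s d) (e j), e', ?_⟩
  rw [hsplit, P_append, P_cons, mul_assoc (zb n s), mul_assoc (P e l₁), mul_assoc (t e j),
    hd, zb_left, ← mul_assoc (t e j), htj, mul_assoc (zb n (e j)), zb_left, zb_left d]
  rw [zb_left (e j) (P e l₁), ← mul_assoc (zb n s), zb_mul, ← mul_assoc, zb_mul,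
    P_congr h₁, P_congr h₂, ← P_cons, ← P_append, ← hsplit]
  congr 1
  cases s <;> cases d <;> cases e j <;> rfl

lemma step_z (s : Bool) (e : Fin n → Bool) :
    (zb n s * P e (List.finRange n)) * z = zb n (!s) * P e (List.finRange n) := by
  rw [mul_assoc, ← z_mul_comm, ← mul_assoc]
  cases s <;> simp [zb, hz2]

/-- normal forms -/
def S (n : ℕ) : Set (PG n) :=
  {g | ∃ (s : Bool) (e : Fin n → Bool), g = zb n s * P e (List.finRange n)}

lemma one_mem_S : (1 : PG n) ∈ S n := by
  refine ⟨false, fun _ => false, ?_⟩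
  rw [zb, if_neg (by simp), one_mul, P]
  exact (List.prod_eq_one (by simp [t])).symm

lemma S_mul_gen {g : PG n} (hg : g ∈ S n) (a : Fin n ⊕ Unit) :
    g * PresentedGroup.of a ∈ S n := by
  obtain ⟨s, e, rfl⟩ := hg
  cases a with
  | inl j =>
    obtain ⟨s', e', h⟩ := step_x s e j
    exact ⟨s', e', h.symm ▸ rfl⟩
  | inr u =>
    exact ⟨!s, e, (step_z s e).symm ▸ rfl⟩

lemma S_mul_gen_inv {g : PG n} (hg : g ∈ S n) (a : Fin n ⊕ Unit) :
    g * (PresentedGroup.of a)⁻¹ ∈ S n := by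
  cases a with
  | inl j =>
    rw [show (PresentedGroup.of (Sum.inl j) : PG n)⁻¹ = (x j)⁻¹ from rfl, xinv, ← mul_assoc]
    exact S_mul_gen (S_mul_gen hg (Sum.inr ())) (Sum.inl j)
  | inr u =>
    rw [show (PresentedGroup.of (Sum.inr u) : PG n)⁻¹ = (z)⁻¹ from rfl, zinv]
    exact S_mul_gen hg (Sum.inr ())

lemma all_mem_S (g : PG n) : g ∈ S n := by
  have htop := PresentedGroup.closure_range_of (quatRels n)
  have hg : g ∈ (Subgroup.closure (Set.range (PresentedGroup.of :
      (Fin n ⊕ Unit) → PG n))).toSubmonoid := htop ▸ Subgroup.mem_top g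
  rw [Subgroup.closure_toSubmonoid] at hg
  have key : ∀ h ∈ S n, h * g ∈ S n := by
    refine Submonoid.closure_induction (fun u hu => ?_) (fun h hh => by simpa using hh)
      (fun u v _ _ pu pv h hh => by rw [← mul_assoc]; exact pv _ (pu h hh)) hg
    · rcases hu with ⟨a, rfl⟩ | hu
      · exact fun h hh => S_mul_gen hh a
      · rw [Set.mem_inv] at hu
        obtain ⟨a, ha⟩ := hu
        intro h hh
        rw [show u = (PresentedGroup.of a)⁻¹ by rw [ha, inv_inv]]
        exact S_mul_gen_inv hh a
  simpa using key 1 one_mem_S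


/-! ### The homomorphism to the model -/

def φ (n : ℕ) : PG n →* Q n := PresentedGroup.toGroup (quatRels_hold n)

lemma φ_of (a : Fin n ⊕ Unit) : φ n (PresentedGroup.of a) = gen n a :=
  PresentedGroup.toGroup.of _

lemma Bf_single_left (a : Fin n) (v : Fin n → ZMod 2) :
    Bf (Pi.single a 1) v = ∑ j, Bc a j * v j := by
  simp [Bf, Pi.single_apply, ite_mul, mul_ite, Finset.sum_ite_eq', mul_comm, mul_assoc]

lemma φ_P (e : Fin n → Bool) :
    ∀ l : List (Fin n), List.Pairwise (· < ·) l →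
      φ n (P e l) = ⟨0, fun i => if i ∈ l ∧ e i then 1 else 0⟩
  | [], _ => by
    rw [P_nil, map_one]
    show Q.mk 0 0 = _
    simp
    rfl
  | a :: l, hp => by
    obtain ⟨ha, hl⟩ := List.pairwise_cons.mp hp
    rw [P_cons, map_mul, φ_P e l hl]
    cases hea : e a
    · have : t e a = 1 := by simp [t, hea]
      rw [this, map_one, one_mul]
      congr 1
      funext i
      by_cases hia : i = a
      · subst hia; simp [hea]
      · simp [hia]
    · have : t e a = x a := by simp [t, hea]
      rw [this, x, φ_of]
      show Q.mk _ _ = _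
      simp only [gen, Q.mk.injEq]
      constructor
      · rw [zero_add, zero_add, Bf_single_left]
        apply Finset.sum_eq_zero
        intro j _
        by_cases hj : j ∈ l ∧ e j
        · have haj : a < j := ha j hj.1
          have : Bc a j = 0 := by
            rw [Bc, if_neg]
            push_neg
            refine ⟨?_, ?_⟩
            · exact Fin.ne_of_lt haj
            · have := Fin.lt_def.mp haj; omega
          rw [this, zero_mul]
        · simp [hj]
      · funext i
        by_cases hia : i = a
        · subst hia
          have hnotmem : i ∉ l := fun hm => lt_irrefl i (ha i hm)
          simp [hnotmem, hea]
        · simp [Pi.single_apply, hia]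

lemma pairwise_finRange : List.Pairwise (· < ·) (List.finRange n) :=
  List.pairwise_lt_finRange n

lemma φ_NF (s : Bool) (e : Fin n → Bool) :
    φ n (zb n s * P e (List.finRange n)) =
      ⟨if s then 1 else 0, fun i => if e i then 1 else 0⟩ := by
  have hzb : φ n (zb n s) = ⟨if s then 1 else 0, 0⟩ := by
    cases s
    · rw [zb, if_neg (by simp), map_one]; rfl
    · rw [zb, if_pos rfl, z, φ_of]; rfl
  rw [map_mul, hzb, φ_P e _ pairwise_finRange]
  show Q.mk _ _ = _
  simp [Bf_zero_left, Bf_zero_right, List.mem_finRange]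

end QuatAux


/-- The group `Quat_{n+1}` presented by the above generators and relations has cardinality
`2^{n+1}`, its elements being exactly `± â_1^{ε₁} ⋯ â_n^{ε_n}` with `ε_k ∈ {0,1}`. -/
theorem quat_card (n : ℕ) :
    Nat.card (PresentedGroup (quatRels n)) = 2^(n+1) ∧
    ∀ g : PresentedGroup (quatRels n), ∃ (s : Bool) (e : Fin n → Bool),
      g = (if s then PresentedGroup.of (Sum.inr ()) else 1) *
          (((List.finRange n).map
            (fun i => if e i then PresentedGroup.of (Sum.inl i) else 1)).prod) := by
  classical
  constructor
  · set F : Bool × (Fin n → Bool) → QuatAux.PG n :=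
      fun p => QuatAux.zb n p.1 * QuatAux.P p.2 (List.finRange n) with hF
    have hbij : Function.Bijective F := by
      constructor
      · intro p q h
        have h2 := congrArg (QuatAux.φ n) h
        rw [hF] at h2
        simp only at h2
        rw [QuatAux.φ_NF, QuatAux.φ_NF] at h2
        have hs := congrArg QuatAux.Q.s h2
        have he := congrArg QuatAux.Q.e h2
        simp only at hs he
        have hb : ∀ a b : Bool, ((if a then (1:ZMod 2) else 0) = (if b then 1 else 0)) → a = b := by
          decide
        have h1 : p.1 = q.1 := hb _ _ hs
        have h2' : p.2 = q.2 := funext fun i => hb _ _ (congrFun he i)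
        exact Prod.ext h1 h2' 
      · intro g
        obtain ⟨s, e, hg⟩ := QuatAux.all_mem_S g
        exact ⟨(s, e), hg.symm⟩
    have := Nat.card_eq_of_bijective F hbij
    rw [← this]
    simp only [Nat.card_eq_fintype_card, Fintype.card_prod, Fintype.card_bool,
      Fintype.card_fun, Fintype.card_fin, pow_succ]
    ring
  · intro g
    obtain ⟨s, e, hg⟩ := QuatAux.all_mem_S g
    exact ⟨s, e, hg⟩
end

section
/- In the Clifford algebra Cl⁰_{n+1} with generators â_i as above and á_i = (1+â_i)/√2, the braid relation á_i á_{i+1} á_i = á_{i+1} á_i á_{i+1} holds for all 1 ≤ i ≤ n-1. Moreover if |i-j| ≠ 1 then á_i á_j = á_j á_i, and if |i-j| = 1 then â_j á_i = á_i⁻¹ â_j. -/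
/-- `á_i = (1 + â_i)/√2`. -/
noncomputable def acuteEl {n : ℕ} {A : Type*} [Ring A] [Algebra ℝ A] (a : Fin n → A) (i : Fin n) : A :=
  (Real.sqrt 2)⁻¹ • (1 + a i)

/-- `à_i = (1 - â_i)/√2 = á_i⁻¹`. -/
noncomputable def graveEl {n : ℕ} {A : Type*} [Ring A] [Algebra ℝ A] (a : Fin n → A) (i : Fin n) : A :=
  (Real.sqrt 2)⁻¹ • (1 - a i)

lemma braid_core {A : Type*} [Ring A] (x y : A) (hx : x * x = -1)
    (hxy : x * y = -(y * x)) : (1 + x) * (1 + y) * (1 + x) = 2 • (x + y) := by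
  have h1 : x * y * x = y := by
    rw [hxy, neg_mul, mul_assoc, hx, mul_neg_one, neg_neg]
  have expand : (1 + x) * (1 + y) * (1 + x)
      = 1 + x + y + x * y + x + x * x + y * x + x * y * x := by noncomm_ring
  rw [expand, hx, h1, hxy]
  abel

/-- In the even Clifford algebra with generators `â_i`: the braid relation
`á_i á_{i+1} á_i = á_{i+1} á_i á_{i+1}` holds; `á_i á_j = á_j á_i` for `|i-j| ≠ 1`;
and `â_j á_i = á_i⁻¹ â_j` for `|i-j| = 1` (with `á_i⁻¹ = à_i`). -/
theorem acute_braid_relations (n : ℕ) (A : Type*) [Ring A] [Algebra ℝ A] (a : Fin n → A)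
    (hsq : ∀ i, a i ^ 2 = -1)
    (hcomm : ∀ i j : Fin n, (i : ℕ) + 1 ≠ (j : ℕ) → (j : ℕ) + 1 ≠ (i : ℕ) →
      a i * a j = a j * a i)
    (hanti : ∀ i j : Fin n, ((i : ℕ) + 1 = (j : ℕ) ∨ (j : ℕ) + 1 = (i : ℕ)) →
      a i * a j = -(a j * a i)) :
    (∀ i j : Fin n, (i : ℕ) + 1 = (j : ℕ) →
      acuteEl a i * acuteEl a j * acuteEl a i = acuteEl a j * acuteEl a i * acuteEl a j) ∧
    (∀ i j : Fin n, (i : ℕ) + 1 ≠ (j : ℕ) → (j : ℕ) + 1 ≠ (i : ℕ) →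
      acuteEl a i * acuteEl a j = acuteEl a j * acuteEl a i) ∧
    (∀ i j : Fin n, ((i : ℕ) + 1 = (j : ℕ) ∨ (j : ℕ) + 1 = (i : ℕ)) →
      a j * acuteEl a i = graveEl a i * a j) := by
  refine ⟨?_, ?_, ?_⟩
  · intro i j hij
    have hxy := hanti i j (Or.inl hij)
    have hyx : a j * a i = -(a i * a j) := by rw [hxy, neg_neg]
    have hx : a i * a i = -1 := by rw [← sq]; exact hsq i
    have hy : a j * a j = -1 := by rw [← sq]; exact hsq j
    simp only [acuteEl, smul_mul_assoc, mul_smul_comm]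
    rw [braid_core (a i) (a j) hx hxy, braid_core (a j) (a i) hy hyx, add_comm]
  · intro i j h1 h2
    have hc := hcomm i j h1 h2
    simp only [acuteEl, smul_mul_assoc, mul_smul_comm]
    congr 1
    congr 1
    have e1 : (1 + a i) * (1 + a j) = 1 + a i + a j + a i * a j := by noncomm_ring
    have e2 : (1 + a j) * (1 + a i) = 1 + a j + a i + a j * a i := by noncomm_ring
    rw [e1, e2, hc]
    abel
  · intro i j h
    have hxy := hanti i j h
    simp only [acuteEl, graveEl, smul_mul_assoc, mul_smul_comm]
    congr 1
    have e1 : a j * (1 + a i) = a j + a j * a i := by noncomm_ring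
    have e2 : (1 - a i) * a j = a j - a i * a j := by noncomm_ring
    rw [e1, e2, hxy]
    abel
end

section
/- Let σ ∈ S_{n+1}, let l = inv(σ) and b = block(σ) be the number of indices j such that σ blocks at j. Then the number of 1-dimensional preancestries of a fixed reduced word for σ equals l - n + b. Equivalently, the number of bounded regions in the wiring diagram of σ (pairs of consecutive crossings on the same row) equals l - n + b. -/
/-- The number of inversions of a permutation. -/
def invCount {m : ℕ} (σ : Equiv.Perm (Fin m)) : ℕ :=
  (Finset.univ.filter fun p : Fin m × Fin m => p.1 < p.2 ∧ σ p.2 < σ p.1).card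

/-- The Coxeter generator `a_i`, i.e. the adjacent transposition `(i, i+1)`. -/
def cox {n : ℕ} (i : Fin n) : Equiv.Perm (Fin (n+1)) :=
  Equiv.swap i.castSucc i.succ

/-- A preancestry for the word `w = a_{i₁}⋯a_{i_l}`: a sequence `(ρ_k)_{0 ≤ k ≤ l}` of
permutations with `ρ₀ = ρ_l = η` (the longest element), each `ρ_k` equal to `ρ_{k-1}` or
`ρ_{k-1} a_{i_k}`, and with the move `ρ_k = ρ_{k-1} a_{i_k}` forced whenever
`ρ_{k-1} a_{i_k} > ρ_{k-1}` (in length). -/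
def IsPreancestry {n : ℕ} (w : List (Fin n))
    (ρ : Fin (w.length + 1) → Equiv.Perm (Fin (n+1))) : Prop :=
  ρ 0 = Fin.revPerm ∧ ρ (Fin.last w.length) = Fin.revPerm ∧
  (∀ k : Fin w.length,
    ρ k.succ = ρ k.castSucc ∨ ρ k.succ = ρ k.castSucc * cox (w.get k)) ∧
  (∀ k : Fin w.length,
    invCount (ρ k.castSucc) < invCount (ρ k.castSucc * cox (w.get k)) →
      ρ k.succ = ρ k.castSucc * cox (w.get k))

/-- The dimension of a preancestry: the number of indices `k` with `ρ_k < ρ_{k-1}`. -/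
def preDim {n : ℕ} (w : List (Fin n))
    (ρ : Fin (w.length + 1) → Equiv.Perm (Fin (n+1))) : ℕ :=
  (Finset.univ.filter fun k : Fin w.length =>
    invCount (ρ k.succ) < invCount (ρ k.castSucc)).card

lemma cox_val {n : ℕ} (i : Fin n) (x : Fin (n+1)) :
    ((cox i x : Fin (n+1)) : ℕ) = if (x:ℕ) = (i:ℕ) then (i:ℕ)+1 else if (x:ℕ) = (i:ℕ)+1 then (i:ℕ) else (x:ℕ) := by
  simp only [cox, Equiv.swap_apply_def]
  split_ifs with h1 h2 h3 h4 h5 <;> simp_all [Fin.ext_iff, Fin.val_eq_val]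



lemma cox_sorted {n : ℕ} (i : Fin n) {a b : Fin (n+1)} (hab : a < b)
    (hne : ¬ (a = i.castSucc ∧ b = i.succ)) : cox i a < cox i b := by
  have ha := cox_val i a
  have hb := cox_val i b
  have h1 : (i.castSucc : ℕ) = i := rfl
  have h2 : (i.succ : ℕ) = i + 1 := rfl
  have hib : (i:ℕ) < n := i.isLt
  rw [Fin.lt_iff_val_lt_val] at hab ⊢
  rw [not_and_or] at hne
  have hne' : (a:ℕ) ≠ i ∨ (b:ℕ) ≠ (i:ℕ)+1 := by
    rcases hne with h | h
    · left; intro hh; exact h (Fin.ext (by rw [hh, h1]))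
    · right; intro hh; exact h (Fin.ext (by rw [hh, h2]))
  split_ifs at ha hb <;> omega



lemma cox_cox {n : ℕ} (i : Fin n) (π : Equiv.Perm (Fin (n+1))) : π * cox i * cox i = π := by
  rw [mul_assoc, cox, Equiv.swap_mul_self, mul_one]



lemma invCount_core {n : ℕ} (π : Equiv.Perm (Fin (n+1))) (i : Fin n) :
    ((Finset.univ.filter fun p : Fin (n+1) × Fin (n+1) =>
        p.1 < p.2 ∧ (π * cox i) p.2 < (π * cox i) p.1).erase (i.castSucc, i.succ)).card =
    ((Finset.univ.filter fun p : Fin (n+1) × Fin (n+1) =>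
        p.1 < p.2 ∧ π p.2 < π p.1).erase (i.castSucc, i.succ)).card := by
  apply Finset.card_bij' (fun p _ => (cox i p.1, cox i p.2)) (fun p _ => (cox i p.1, cox i p.2))
  · rintro ⟨a, b⟩ hp
    simp only [Finset.mem_erase, Finset.mem_filter, Finset.mem_univ, true_and] at hp ⊢
    obtain ⟨hne, hab, hinv⟩ := hp
    have hsort : cox i a < cox i b := by
      apply cox_sorted i hab
      rintro ⟨rfl, rfl⟩; exact hne rfl
    refine ⟨?_, hsort, ?_⟩
    · rintro h
      have h1 : cox i a = i.castSucc := congrArg Prod.fst h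
      have h2 : cox i b = i.succ := congrArg Prod.snd h
      have : a = cox i i.castSucc := by rw [← h1]; simp [cox]
      have hb : b = cox i i.succ := by rw [← h2]; simp [cox]
      rw [cox, Equiv.swap_apply_left] at this
      rw [cox, Equiv.swap_apply_right] at hb
      subst this; subst hb
      exact absurd hab (by simp [Fin.lt_iff_val_lt_val])
    · simpa [Equiv.Perm.mul_apply, cox, Equiv.swap_apply_self] using hinv
  · rintro ⟨a, b⟩ hp
    simp only [Finset.mem_erase, Finset.mem_filter, Finset.mem_univ, true_and] at hp ⊢
    obtain ⟨hne, hab, hinv⟩ := hp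
    have hsort : cox i a < cox i b := by
      apply cox_sorted i hab
      rintro ⟨rfl, rfl⟩; exact hne rfl
    refine ⟨?_, hsort, ?_⟩
    · rintro h
      have h1 : cox i a = i.castSucc := congrArg Prod.fst h
      have h2 : cox i b = i.succ := congrArg Prod.snd h
      have : a = cox i i.castSucc := by rw [← h1]; simp [cox]
      have hb : b = cox i i.succ := by rw [← h2]; simp [cox]
      rw [cox, Equiv.swap_apply_left] at this
      rw [cox, Equiv.swap_apply_right] at hb
      subst this; subst hb
      exact absurd hab (by simp [Fin.lt_iff_val_lt_val])
    · simp only [Equiv.Perm.mul_apply, cox, Equiv.swap_apply_self]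
      exact hinv
  · rintro ⟨a, b⟩ _; simp [cox, Equiv.swap_apply_self]
  · rintro ⟨a, b⟩ _; simp [cox, Equiv.swap_apply_self]


lemma invCount_mul_cox_of_asc {n : ℕ} {π : Equiv.Perm (Fin (n+1))} {i : Fin n}
    (h : π i.castSucc < π i.succ) : invCount (π * cox i) = invCount π + 1 := by
  classical
  set e : Fin (n+1) × Fin (n+1) := (i.castSucc, i.succ) with he
  have hlt : (i.castSucc : Fin (n+1)) < i.succ := Fin.castSucc_lt_succ
  have hmemA : e ∈ Finset.univ.filter fun p : Fin (n+1) × Fin (n+1) =>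
      p.1 < p.2 ∧ (π * cox i) p.2 < (π * cox i) p.1 := by
    simp only [Finset.mem_filter, Finset.mem_univ, true_and, he]
    refine ⟨hlt, ?_⟩
    simp only [Equiv.Perm.mul_apply, cox, Equiv.swap_apply_left, Equiv.swap_apply_right]
    exact h
  have hnmemB : e ∉ Finset.univ.filter fun p : Fin (n+1) × Fin (n+1) =>
      p.1 < p.2 ∧ π p.2 < π p.1 := by
    simp only [Finset.mem_filter, Finset.mem_univ, true_and, he, not_and]
    intro _
    exact not_lt.2 h.le
  have h1 := Finset.card_erase_add_one hmemA
  have h2 : ((Finset.univ.filter fun p : Fin (n+1) × Fin (n+1) =>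
      p.1 < p.2 ∧ π p.2 < π p.1).erase e) = (Finset.univ.filter fun p : Fin (n+1) × Fin (n+1) =>
      p.1 < p.2 ∧ π p.2 < π p.1) := Finset.erase_eq_of_notMem hnmemB
  have := invCount_core π i
  unfold invCount
  rw [← h1, this, h2]

lemma invCount_mul_cox_of_desc {n : ℕ} {π : Equiv.Perm (Fin (n+1))} {i : Fin n}
    (h : π i.succ < π i.castSucc) : invCount π = invCount (π * cox i) + 1 := by
  classical
  set e : Fin (n+1) × Fin (n+1) := (i.castSucc, i.succ) with he
  have hlt : (i.castSucc : Fin (n+1)) < i.succ := Fin.castSucc_lt_succ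
  have hmemB : e ∈ Finset.univ.filter fun p : Fin (n+1) × Fin (n+1) =>
      p.1 < p.2 ∧ π p.2 < π p.1 := by
    simp only [Finset.mem_filter, Finset.mem_univ, true_and, he]
    exact ⟨hlt, h⟩
  have hnmemA : e ∉ Finset.univ.filter fun p : Fin (n+1) × Fin (n+1) =>
      p.1 < p.2 ∧ (π * cox i) p.2 < (π * cox i) p.1 := by
    simp only [Finset.mem_filter, Finset.mem_univ, true_and, he, not_and]
    intro _
    simp only [Equiv.Perm.mul_apply, cox, Equiv.swap_apply_left, Equiv.swap_apply_right]
    exact not_lt.2 h.le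
  have h1 := Finset.card_erase_add_one hmemB
  have h2 : ((Finset.univ.filter fun p : Fin (n+1) × Fin (n+1) =>
      p.1 < p.2 ∧ (π * cox i) p.2 < (π * cox i) p.1).erase e)
      = (Finset.univ.filter fun p : Fin (n+1) × Fin (n+1) =>
      p.1 < p.2 ∧ (π * cox i) p.2 < (π * cox i) p.1) := Finset.erase_eq_of_notMem hnmemA
  have := invCount_core π i
  unfold invCount
  rw [← h1, ← this, h2]


section eta
variable {n : ℕ}
local notation "η" => (Fin.revPerm : Equiv.Perm (Fin (n+1)))

lemma eta_desc (j : Fin n) : η j.succ < η j.castSucc := by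
  simp only [Fin.revPerm_apply]
  exact Fin.rev_lt_rev.2 (Fin.castSucc_lt_succ : j.castSucc < j.succ)

lemma invCount_eta_cox (j : Fin n) : invCount η = invCount (η * cox j) + 1 :=
  invCount_mul_cox_of_desc (eta_desc j)

lemma invCount_eta_cox_lt (j : Fin n) : invCount (η * cox j) < invCount η := by
  rw [invCount_eta_cox j]; omega

lemma eta_cox_desc {i j : Fin n} (hji : j ≠ i) :
    (η * cox i) j.succ < (η * cox i) j.castSucc := by
  have h : cox i j.castSucc < cox i j.succ := by
    apply cox_sorted i (Fin.castSucc_lt_succ : j.castSucc < j.succ)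
    rintro ⟨h1, -⟩
    exact hji (Fin.castSucc_injective _ h1)
  simp only [Equiv.Perm.mul_apply, Fin.revPerm_apply]
  exact Fin.rev_lt_rev.2 h

lemma invCount_eta_cox_cox_lt {i j : Fin n} (hji : j ≠ i) :
    invCount (η * cox i * cox j) < invCount (η * cox i) := by
  rw [invCount_mul_cox_of_desc (eta_cox_desc hji)]; omega

lemma invCount_le_eta (π : Equiv.Perm (Fin (n+1))) : invCount π ≤ invCount η := by
  unfold invCount
  apply Finset.card_le_card
  intro p hp
  simp only [Finset.mem_filter, Finset.mem_univ, true_and, Fin.revPerm_apply] at hp ⊢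
  exact ⟨hp.1, Fin.rev_lt_rev.2 hp.1⟩

lemma cox_ne_one (i : Fin n) : cox i ≠ 1 := by
  intro h
  have := congrArg (fun e => e i.castSucc) h
  simp only [cox, Equiv.swap_apply_left, Equiv.Perm.one_apply] at this
  exact absurd this (Fin.ne_of_lt (Fin.castSucc_lt_succ : i.castSucc < i.succ)).symm

lemma asc_or_desc (π : Equiv.Perm (Fin (n+1))) (i : Fin n) :
    π i.castSucc < π i.succ ∨ π i.succ < π i.castSucc := by
  rcases lt_or_gt_of_ne (fun h => (Fin.ne_of_lt (Fin.castSucc_lt_succ : i.castSucc < i.succ)) (π.injective h)) with h | h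
  · exact Or.inl h
  · exact Or.inr h
end eta


def crossCount {n : ℕ} (j : Fin n) (π : Equiv.Perm (Fin (n+1))) : ℕ :=
  (Finset.univ.filter fun p : Fin (n+1) × Fin (n+1) =>
    (p.1:ℕ) ≤ (j:ℕ) ∧ (j:ℕ) < (p.2:ℕ) ∧ π p.2 < π p.1).card



lemma cox_le_iff {n : ℕ} {i j : Fin n} (hij : i ≠ j) (x : Fin (n+1)) :
    ((cox i x : Fin (n+1)) : ℕ) ≤ (j:ℕ) ↔ (x:ℕ) ≤ (j:ℕ) := by
  have h := cox_val i x
  have : (i:ℕ) ≠ (j:ℕ) := fun hh => hij (Fin.ext hh)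
  split_ifs at h <;> omega

lemma crossCount_mul_cox_of_ne {n : ℕ} {i j : Fin n} (hij : i ≠ j)
    (π : Equiv.Perm (Fin (n+1))) : crossCount j (π * cox i) = crossCount j π := by
  unfold crossCount
  apply Finset.card_bij' (fun p _ => (cox i p.1, cox i p.2)) (fun p _ => (cox i p.1, cox i p.2))
  · rintro ⟨a, b⟩ hp
    simp only [Finset.mem_filter, Finset.mem_univ, true_and] at hp ⊢
    refine ⟨(cox_le_iff hij a).2 hp.1, ?_, ?_⟩
    · have := (cox_le_iff hij b).not
      omega
    · simpa [Equiv.Perm.mul_apply, cox, Equiv.swap_apply_self] using hp.2.2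
  · rintro ⟨a, b⟩ hp
    simp only [Finset.mem_filter, Finset.mem_univ, true_and] at hp ⊢
    refine ⟨(cox_le_iff hij a).2 hp.1, ?_, ?_⟩
    · have := (cox_le_iff hij b).not
      omega
    · simp only [Equiv.Perm.mul_apply, cox, Equiv.swap_apply_self]
      exact hp.2.2
  · rintro ⟨a, b⟩ _; simp [cox, Equiv.swap_apply_self]
  · rintro ⟨a, b⟩ _; simp [cox, Equiv.swap_apply_self]

lemma crossCount_mul_cox_self {n : ℕ} {j : Fin n} {π : Equiv.Perm (Fin (n+1))}
    (h : π j.castSucc < π j.succ) :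
    crossCount j π + 1 ≤ crossCount j (π * cox j) := by
  classical
  set e : Fin (n+1) × Fin (n+1) := (j.castSucc, j.succ) with he
  have hsub : insert e (Finset.univ.filter fun p : Fin (n+1) × Fin (n+1) =>
      (p.1:ℕ) ≤ (j:ℕ) ∧ (j:ℕ) < (p.2:ℕ) ∧ π p.2 < π p.1) ⊆
      (Finset.univ.filter fun p : Fin (n+1) × Fin (n+1) =>
      (p.1:ℕ) ≤ (j:ℕ) ∧ (j:ℕ) < (p.2:ℕ) ∧ (π * cox j) p.2 < (π * cox j) p.1) := by
    intro p hp
    rcases Finset.mem_insert.1 hp with rfl | hp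
    · simp only [Finset.mem_filter, Finset.mem_univ, true_and, he]
      refine ⟨le_refl _, by simp [Fin.val_succ], ?_⟩
      simp only [Equiv.Perm.mul_apply, cox, Equiv.swap_apply_left, Equiv.swap_apply_right]
      exact h
    · simp only [Finset.mem_filter, Finset.mem_univ, true_and] at hp ⊢
      obtain ⟨h1, h2, h3⟩ := hp
      refine ⟨h1, h2, ?_⟩
      simp only [Equiv.Perm.mul_apply]
      have c1 : cox j p.1 = p.1 ∨ (p.1 = j.castSucc ∧ cox j p.1 = j.succ) := by
        by_cases hc : p.1 = j.castSucc
        · exact Or.inr ⟨hc, by rw [hc]; exact Equiv.swap_apply_left _ _⟩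
        · refine Or.inl (Equiv.swap_apply_of_ne_of_ne hc ?_)
          intro hh
          have : (p.1:ℕ) = (j:ℕ)+1 := by rw [hh]; rfl
          omega
      have c2 : cox j p.2 = p.2 ∨ (p.2 = j.succ ∧ cox j p.2 = j.castSucc) := by
        by_cases hc : p.2 = j.succ
        · exact Or.inr ⟨hc, by rw [hc]; exact Equiv.swap_apply_right _ _⟩
        · refine Or.inl (Equiv.swap_apply_of_ne_of_ne ?_ hc)
          intro hh
          have : (p.2:ℕ) = (j:ℕ) := by rw [hh]; rfl
          omega
      rcases c1 with hc1 | ⟨hp1, hc1⟩ <;> rcases c2 with hc2 | ⟨hp2, hc2⟩ <;>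
        rw [hc1, hc2]
      · exact h3
      · calc π j.castSucc < π j.succ := h
          _ = π p.2 := by rw [hp2]
          _ < π p.1 := h3
      · calc π p.2 < π p.1 := h3
          _ = π j.castSucc := by rw [hp1]
          _ < π j.succ := h
      · rw [hp1, hp2] at h3
        exact absurd h (not_lt.2 h3.le)
  have hne : e ∉ (Finset.univ.filter fun p : Fin (n+1) × Fin (n+1) =>
      (p.1:ℕ) ≤ (j:ℕ) ∧ (j:ℕ) < (p.2:ℕ) ∧ π p.2 < π p.1) := by
    simp only [Finset.mem_filter, Finset.mem_univ, true_and, he, not_and]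
    intro _ _
    exact not_lt.2 h.le
  have := Finset.card_le_card hsub
  rw [Finset.card_insert_of_notMem hne] at this
  unfold crossCount
  omega


section prefixes
variable {n : ℕ} (v : List (Fin n))

noncomputable def pre (k : ℕ) : Equiv.Perm (Fin (n+1)) := ((v.take k).map cox).prod

lemma pre_succ (k : ℕ) (hk : k < v.length) :
    pre v (k+1) = pre v k * cox (v.get ⟨k, hk⟩) := by
  unfold pre
  rw [List.map_take, List.map_take, List.prod_take_succ _ k (by simpa using hk)]
  congr 1
  simp

lemma pre_zero : pre v 0 = 1 := by simp [pre]

lemma invCount_pre_le (k : ℕ) : invCount (pre v k) ≤ k := by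
  induction k with
  | zero =>
    rw [pre_zero]
    have : invCount (1 : Equiv.Perm (Fin (n+1))) = 0 := by
      unfold invCount
      rw [Finset.card_eq_zero, Finset.filter_eq_empty_iff]
      rintro p -
      simp only [Equiv.Perm.one_apply]
      rintro ⟨h1, h2⟩
      exact absurd h1 (not_lt.2 h2.le)
    omega
  | succ k ih =>
    by_cases hk : k < v.length
    · rw [pre_succ v k hk]
      rcases asc_or_desc (pre v k) (v.get ⟨k, hk⟩) with h | h
      · rw [invCount_mul_cox_of_asc h]; omega
      · have := invCount_mul_cox_of_desc h; omega
    · have heq : pre v (k+1) = pre v k := by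
        unfold pre
        rw [List.take_of_length_le (by omega), List.take_of_length_le (by omega)]
      rw [heq]
      omega

end prefixes



section reduced
variable {n : ℕ} {v : List (Fin n)}

lemma invCount_pre_ge (hv : invCount (pre v v.length) = v.length) :
    ∀ d k, k + d = v.length → invCount (pre v k) = k := by
  intro d
  induction d with
  | zero => intro k hk; have : k = v.length := by omega
            subst this; exact hv
  | succ d ih =>
    intro k hk
    have hk' : k < v.length := by omega
    have h1 := ih (k+1) (by omega)
    have h2 := invCount_pre_le v k
    rw [pre_succ v k hk'] at h1
    rcases asc_or_desc (pre v k) (v.get ⟨k, hk'⟩) with h | h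
    · rw [invCount_mul_cox_of_asc h] at h1; omega
    · have := invCount_mul_cox_of_desc h; omega

lemma pre_asc (hv : invCount (pre v v.length) = v.length) (k : ℕ) (hk : k < v.length) :
    (pre v k) (v.get ⟨k, hk⟩).castSucc < (pre v k) (v.get ⟨k, hk⟩).succ := by
  have h1 := invCount_pre_ge hv (v.length - k) k (by omega)
  have h2 := invCount_pre_ge hv (v.length - (k+1)) (k+1) (by omega)
  rw [pre_succ v k hk] at h2
  rcases asc_or_desc (pre v k) (v.get ⟨k, hk⟩) with h | h
  · exact h
  · have := invCount_mul_cox_of_desc h; omega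

lemma crossCount_pre_mono (hv : invCount (pre v v.length) = v.length) (j : Fin n)
    (k : ℕ) (hk : k < v.length) :
    crossCount j (pre v k) + (if v.get ⟨k, hk⟩ = j then 1 else 0) ≤ crossCount j (pre v (k+1)) := by
  rw [pre_succ v k hk]
  by_cases h : v.get ⟨k, hk⟩ = j
  · rw [if_pos h]
    have := pre_asc hv k hk
    rw [h] at this ⊢
    exact crossCount_mul_cox_self this
  · rw [if_neg h, crossCount_mul_cox_of_ne h]
    omega

lemma crossCount_pos_of_mem (hv : invCount (pre v v.length) = v.length) {j : Fin n}
    (hj : j ∈ v) : 1 ≤ crossCount j (pre v v.length) := by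
  obtain ⟨k, hk⟩ := List.mem_iff_get.1 hj
  have key : ∀ m, (k:ℕ) < m → m ≤ v.length → 1 ≤ crossCount j (pre v m) := by
    intro m
    induction m with
    | zero => omega
    | succ m ih =>
      intro h1 h2
      by_cases hm : (k:ℕ) < m
      · have := ih hm (by omega)
        have h3 := crossCount_pre_mono hv j m (by omega)
        omega
      · have hmk : m = (k:ℕ) := by omega
        have h3 := crossCount_pre_mono hv j m (by omega)
        subst hmk
        rw [if_pos (by rw [show (⟨(k:ℕ), by omega⟩ : Fin v.length) = k from Fin.ext rfl]; exact hk)] at h3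
        omega
  exact key v.length (by omega) (le_refl _)
end reduced



section block
variable {n : ℕ}


lemma blk_of_not_mem (j : Fin n) :
    ∀ (v : List (Fin n)), j ∉ v → ∀ i : Fin (n+1), (i:ℕ) ≤ (j:ℕ) →
      (((v.map cox).prod i : Fin (n+1)) : ℕ) ≤ (j:ℕ) := by
  intro v
  induction v with
  | nil => intro _ i hi; simpa using hi
  | cons a v ih =>
    intro hj i hi
    have haj : a ≠ j := fun h => hj (h ▸ (List.mem_cons_self : a ∈ a :: v))
    have hav : j ∉ v := fun h => hj (List.mem_cons_of_mem a h)
    have h1 := ih hav i hi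
    simp only [List.map_cons, List.prod_cons, Equiv.Perm.mul_apply]
    have h2 := cox_val a ((v.map cox).prod i)
    have : (a:ℕ) ≠ (j:ℕ) := fun h => haj (Fin.ext h)
    split_ifs at h2 <;> omega

lemma blk_above {σ : Equiv.Perm (Fin (n+1))} {j : Fin n}
    (hblk : ∀ i : Fin (n+1), (i:ℕ) ≤ (j:ℕ) → ((σ i : Fin (n+1)) : ℕ) ≤ (j:ℕ))
    (q : Fin (n+1)) (hq : (j:ℕ) < (q:ℕ)) : (j:ℕ) < ((σ q : Fin (n+1)) : ℕ) := by
  by_contra hc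
  push_neg at hc
  classical
  set S : Finset (Fin (n+1)) := Finset.univ.filter (fun i => (i:ℕ) ≤ (j:ℕ)) with hS
  have hmaps : Finset.image σ S ⊆ S := by
    intro x hx
    simp only [Finset.mem_image, hS, Finset.mem_filter, Finset.mem_univ, true_and] at hx ⊢
    obtain ⟨a, ha, rfl⟩ := hx
    exact hblk a ha
  have himg : Finset.image σ S = S := Finset.eq_of_subset_of_card_le hmaps
    (by rw [Finset.card_image_of_injective _ σ.injective])
  have hq' : σ q ∈ S := by simp [hS, hc]
  rw [← himg] at hq'
  simp only [Finset.mem_image, hS, Finset.mem_filter, Finset.mem_univ, true_and] at hq'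
  obtain ⟨a, ha, haq⟩ := hq'
  have : a = q := σ.injective haq
  omega

lemma crossCount_eq_zero_of_blk {σ : Equiv.Perm (Fin (n+1))} {j : Fin n}
    (hblk : ∀ i : Fin (n+1), (i:ℕ) ≤ (j:ℕ) → ((σ i : Fin (n+1)) : ℕ) ≤ (j:ℕ)) :
    crossCount j σ = 0 := by
  unfold crossCount
  rw [Finset.card_eq_zero, Finset.filter_eq_empty_iff]
  rintro p -
  rintro ⟨h1, h2, h3⟩
  have h4 := hblk p.1 h1
  have h5 := blk_above hblk p.2 h2
  rw [Fin.lt_iff_val_lt_val] at h3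
  omega
end block


section classify
variable {n : ℕ} {w : List (Fin n)} {ρ : Fin (w.length + 1) → Equiv.Perm (Fin (n+1))}
local notation "η" => (Fin.revPerm : Equiv.Perm (Fin (n+1)))
local notation "l" => w.length

lemma classify (hpre : IsPreancestry w ρ) {k0 : Fin l}
    (hD : (Finset.univ.filter fun k : Fin l =>
      invCount (ρ k.succ) < invCount (ρ k.castSucc)) = {k0}) :
    ∃ k1 : Fin l, (k0:ℕ) < (k1:ℕ) ∧ w.get k1 = w.get k0 ∧
      (∀ m : Fin l, (k0:ℕ) < (m:ℕ) → (m:ℕ) < (k1:ℕ) → w.get m ≠ w.get k0) ∧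
      (∀ m : Fin (l+1), ρ m =
        if (m:ℕ) ≤ (k0:ℕ) then η else if (m:ℕ) ≤ (k1:ℕ) then η * cox (w.get k0) else η) := by
  classical
  obtain ⟨h0, hl, hstep, hforce⟩ := hpre
  have hP : ∀ k : Fin l, (invCount (ρ k.succ) < invCount (ρ k.castSucc)) ↔ k = k0 := by
    intro k
    have := Finset.ext_iff.1 hD k
    simpa using this
  set i := w.get k0 with hi
  -- Claim A: ρ is η up to k0
  have hA : ∀ m : ℕ, (hm : m ≤ (k0:ℕ)) → ρ ⟨m, by omega⟩ = η := by
    intro m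
    induction m with
    | zero => intro _; exact h0
    | succ m ih =>
      intro hm
      have hml : m < l := by omega
      have hprev : ρ (⟨m, hml⟩ : Fin l).castSucc = η := by
        have : (⟨m, hml⟩ : Fin l).castSucc = (⟨m, by omega⟩ : Fin (l+1)) := Fin.ext (by simp)
        rw [this]; exact ih (by omega)
      have hnk0 : (⟨m, hml⟩ : Fin l) ≠ k0 := by
        intro h
        have : m = (k0:ℕ) := by rw [← h]
        omega
      have hsucc : ρ (⟨m, hml⟩ : Fin l).succ = η := by
        rcases hstep ⟨m, hml⟩ with h | h
        · rw [h, hprev]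
        · exfalso
          apply hnk0
          rw [← hP]
          rw [h, hprev]
          exact invCount_eta_cox_lt _
      have : (⟨m, hml⟩ : Fin l).succ = (⟨m+1, by omega⟩ : Fin (l+1)) := Fin.ext (by simp)
      rw [← this]; exact hsucc
  have hk0cs : ρ k0.castSucc = η := by
    have : k0.castSucc = (⟨(k0:ℕ), by omega⟩ : Fin (l+1)) := Fin.ext (by simp)
    rw [this]; exact hA _ (le_refl _)
  have hk0desc : invCount (ρ k0.succ) < invCount (ρ k0.castSucc) := (hP k0).2 rfl
  have hk0succ : ρ k0.succ = η * cox i := by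
    rcases hstep k0 with h | h
    · rw [h] at hk0desc; omega
    · rw [h, hk0cs, hi]
  -- from state η * cox i: stays until letter i appears
  have hmid : ∀ m : ℕ, (hm1 : (k0:ℕ) < m) → (hm2 : m < l) →
      ρ ⟨m, by omega⟩ = η * cox i → w.get ⟨m, hm2⟩ ≠ i → ρ ⟨m+1, by omega⟩ = η * cox i := by
    intro m hm1 hm2 hcur hne
    have hcs : (⟨m, hm2⟩ : Fin l).castSucc = (⟨m, by omega⟩ : Fin (l+1)) := Fin.ext (by simp)
    have hsc : (⟨m, hm2⟩ : Fin l).succ = (⟨m+1, by omega⟩ : Fin (l+1)) := Fin.ext (by simp)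
    have hnk0 : (⟨m, hm2⟩ : Fin l) ≠ k0 := by
      intro h
      have : m = (k0:ℕ) := by rw [← h]
      omega
    rcases hstep ⟨m, hm2⟩ with h | h
    · rw [← hsc, h, hcs, hcur]
    · exfalso
      apply hnk0
      rw [← hP, h, hcs, hcur]
      exact invCount_eta_cox_cox_lt hne
  -- existence of return
  have hT : ∃ m : Fin l, (k0:ℕ) < (m:ℕ) ∧ w.get m = i := by
    by_contra hc
    push_neg at hc
    have hstay : ∀ m : ℕ, (hm1 : (k0:ℕ) < m) → (hm2 : m ≤ l) → ρ ⟨m, by omega⟩ = η * cox i := by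
      intro m
      induction m with
      | zero => omega
      | succ m ih =>
        intro hm1 hm2
        by_cases hm : (k0:ℕ) < m
        · exact hmid m hm (by omega) (ih hm (by omega)) (hc _ hm)
        · have : m = (k0:ℕ) := by omega
          subst this
          have : (⟨(k0:ℕ)+1, by omega⟩ : Fin (l+1)) = k0.succ := Fin.ext (by simp)
          rw [this]; exact hk0succ
    have := hstay l (by omega) (le_refl _)
    rw [show (⟨l, by omega⟩ : Fin (l+1)) = Fin.last l from rfl, hl] at this
    exact cox_ne_one i (by
      have := congrArg (fun x => η⁻¹ * x) this
      simpa using this.symm)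
  have hTnonempty : (Finset.univ.filter
      (fun m : Fin l => (k0:ℕ) < (m:ℕ) ∧ w.get m = i)).Nonempty := by
    obtain ⟨m, hm1, hm2⟩ := hT
    exact ⟨m, by simp only [Finset.mem_filter, Finset.mem_univ, true_and]; exact ⟨hm1, hm2⟩⟩
  set k1 := (Finset.univ.filter
      (fun m : Fin l => (k0:ℕ) < (m:ℕ) ∧ w.get m = i)).min' hTnonempty with hk1
  have hk1mem := Finset.min'_mem _ hTnonempty
  rw [← hk1] at hk1mem
  simp only [Finset.mem_filter, Finset.mem_univ, true_and] at hk1mem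
  obtain ⟨hk1gt, hk1occ⟩ := hk1mem
  have hk1min : ∀ m : Fin l, (k0:ℕ) < (m:ℕ) → (m:ℕ) < (k1:ℕ) → w.get m ≠ i := by
    intro m hm1 hm2 hocc
    have hmem : m ∈ Finset.univ.filter
        (fun m : Fin l => (k0:ℕ) < (m:ℕ) ∧ w.get m = i) := by
      simp only [Finset.mem_filter, Finset.mem_univ, true_and]; exact ⟨hm1, hocc⟩
    have := Finset.min'_le _ m hmem
    rw [← hk1] at this
    rw [Fin.le_iff_val_le_val] at this
    omega
  -- values in (k0, k1]
  have hB : ∀ m : ℕ, (hm1 : (k0:ℕ) < m) → (hm2 : m ≤ (k1:ℕ)) → ρ ⟨m, by omega⟩ = η * cox i := by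
    intro m
    induction m with
    | zero => omega
    | succ m ih =>
      intro hm1 hm2
      by_cases hm : (k0:ℕ) < m
      · exact hmid m hm (by omega) (ih hm (by omega))
          (hk1min ⟨m, by omega⟩ hm (by show m < (k1:ℕ); omega))
      · have : m = (k0:ℕ) := by omega
        subst this
        have : (⟨(k0:ℕ)+1, by omega⟩ : Fin (l+1)) = k0.succ := Fin.ext (by simp)
        rw [this]; exact hk0succ
  -- forced return at k1
  have hk1cs : ρ k1.castSucc = η * cox i := by
    have : k1.castSucc = (⟨(k1:ℕ), by omega⟩ : Fin (l+1)) := Fin.ext (by simp)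
    rw [this]; exact hB _ hk1gt (le_refl _)
  have hk1succ : ρ k1.succ = η := by
    have hforced := hforce k1
    rw [hk1cs, hk1occ] at hforced
    have h2 : invCount ((η * cox i) * cox i) = invCount η := by rw [cox_cox]
    rw [h2] at hforced
    rw [hforced (invCount_eta_cox_lt i), cox_cox]
  -- after k1: stays η
  have hC : ∀ m : ℕ, (hm1 : (k1:ℕ) < m) → (hm2 : m ≤ l) → ρ ⟨m, by omega⟩ = η := by
    intro m
    induction m with
    | zero => omega
    | succ m ih =>
      intro hm1 hm2
      by_cases hm : (k1:ℕ) < m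
      · have hml : m < l := by omega
        have hprev : ρ (⟨m, hml⟩ : Fin l).castSucc = η := by
          have : (⟨m, hml⟩ : Fin l).castSucc = (⟨m, by omega⟩ : Fin (l+1)) := Fin.ext (by simp)
          rw [this]; exact ih hm (by omega)
        have hnk0 : (⟨m, hml⟩ : Fin l) ≠ k0 := by
          intro h
          have : m = (k0:ℕ) := by rw [← h]
          omega
        have : (⟨m+1, by omega⟩ : Fin (l+1)) = (⟨m, hml⟩ : Fin l).succ := Fin.ext (by simp)
        rw [this]
        rcases hstep ⟨m, hml⟩ with h | h
        · rw [h, hprev]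
        · exfalso
          apply hnk0
          rw [← hP, h, hprev]
          exact invCount_eta_cox_lt _
      · have : m = (k1:ℕ) := by omega
        subst this
        have : (⟨(k1:ℕ)+1, by omega⟩ : Fin (l+1)) = k1.succ := Fin.ext (by simp)
        rw [this]; exact hk1succ
  refine ⟨k1, hk1gt, hk1occ, hk1min, ?_⟩
  intro m
  rcases le_or_gt (m:ℕ) (k0:ℕ) with h | h
  · rw [if_pos h]
    have : m = (⟨(m:ℕ), by omega⟩ : Fin (l+1)) := Fin.ext rfl
    rw [this]
    exact hA _ h
  · rw [if_neg (by omega)]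
    rcases le_or_gt (m:ℕ) (k1:ℕ) with h2 | h2
    · rw [if_pos h2]
      have : m = (⟨(m:ℕ), by omega⟩ : Fin (l+1)) := Fin.ext rfl
      rw [this]
      exact hB _ h h2
    · rw [if_neg (by omega)]
      have : m = (⟨(m:ℕ), by omega⟩ : Fin (l+1)) := Fin.ext rfl
      rw [this]
      exact hC _ h2 (by omega)
end classify


section canon
variable {n : ℕ} (w : List (Fin n))
local notation "η" => (Fin.revPerm : Equiv.Perm (Fin (n+1)))
local notation "l" => w.length

noncomputable def canon (k0 k1 : Fin l) : Fin (l + 1) → Equiv.Perm (Fin (n+1)) :=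
  fun m => if (m:ℕ) ≤ (k0:ℕ) then η else if (m:ℕ) ≤ (k1:ℕ) then η * cox (w.get k0) else η

lemma canon_spec {k0 k1 : Fin l} (hlt : (k0:ℕ) < (k1:ℕ)) (hocc : w.get k1 = w.get k0)
    (hbetween : ∀ m : Fin l, (k0:ℕ) < (m:ℕ) → (m:ℕ) < (k1:ℕ) → w.get m ≠ w.get k0) :
    IsPreancestry w (canon w k0 k1) ∧
    (Finset.univ.filter fun k : Fin l =>
      invCount (canon w k0 k1 k.succ) < invCount (canon w k0 k1 k.castSucc)) = {k0} := by
  classical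
  set i := w.get k0 with hi
  have hval : ∀ (k : Fin l),
      canon w k0 k1 k.castSucc = (if (k:ℕ) ≤ (k0:ℕ) then η else if (k:ℕ) ≤ (k1:ℕ) then η * cox i else η) ∧
      canon w k0 k1 k.succ = (if (k:ℕ)+1 ≤ (k0:ℕ) then η else if (k:ℕ)+1 ≤ (k1:ℕ) then η * cox i else η) := by
    intro k
    constructor <;> simp [canon, Fin.coe_castSucc, Fin.val_succ, hi]
  have key : ∀ k : Fin l,
      ((canon w k0 k1 k.succ = canon w k0 k1 k.castSucc ∨
        canon w k0 k1 k.succ = canon w k0 k1 k.castSucc * cox (w.get k)) ∧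
      (invCount (canon w k0 k1 k.castSucc) < invCount (canon w k0 k1 k.castSucc * cox (w.get k)) →
        canon w k0 k1 k.succ = canon w k0 k1 k.castSucc * cox (w.get k))) ∧
      (invCount (canon w k0 k1 k.succ) < invCount (canon w k0 k1 k.castSucc) ↔ k = k0) := by
    intro k
    obtain ⟨hc, hs⟩ := hval k
    rcases lt_trichotomy (k:ℕ) (k0:ℕ) with h | h | h
    · -- before k0 : both η
      rw [if_pos h.le] at hc
      rw [if_pos (by omega)] at hs
      rw [hc, hs]
      refine ⟨⟨Or.inl rfl, ?_⟩, ?_⟩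
      · intro hbad
        exact absurd hbad (by have := invCount_eta_cox_lt (w.get k); omega)
      · simp only [lt_irrefl, false_iff]
        intro hk; rw [hk] at h; omega
    · -- k = k0 : descent
      have hk : k = k0 := Fin.ext h
      rw [if_pos h.le] at hc
      rw [if_neg (by omega), if_pos (by omega)] at hs
      rw [hc, hs, hk, ← hi]
      refine ⟨⟨Or.inr rfl, fun _ => rfl⟩, ?_⟩
      simp only [iff_true_intro rfl, iff_true]
      exact invCount_eta_cox_lt i
    · rcases lt_trichotomy (k:ℕ) (k1:ℕ) with h2 | h2 | h2
      · -- strictly between : both η * cox i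
        rw [if_neg (by omega), if_pos (by omega)] at hc
        rw [if_neg (by omega), if_pos (by omega)] at hs
        rw [hc, hs]
        have hne : w.get k ≠ i := hbetween k h h2
        refine ⟨⟨Or.inl rfl, ?_⟩, ?_⟩
        · intro hbad
          exact absurd hbad (by have := invCount_eta_cox_cox_lt hne; omega)
        · simp only [lt_irrefl, false_iff]
          intro hk; rw [hk] at h; omega
      · -- k = k1 : forced ascent
        have hk : k = k1 := Fin.ext h2
        rw [if_neg (by omega), if_pos (by omega)] at hc
        rw [if_neg (by omega), if_neg (by omega)] at hs
        rw [hc, hs, hk, hocc]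
        have hcc : η * cox i * cox i = η := cox_cox i η
        refine ⟨⟨Or.inr hcc.symm, fun _ => hcc.symm⟩, ?_⟩
        constructor
        · intro hbad
          have := invCount_eta_cox_lt i
          omega
        · intro hbad
          have : (k1:ℕ) = (k0:ℕ) := by rw [hbad]
          omega
      · -- after k1 : both η
        rw [if_neg (by omega), if_neg (by omega)] at hc
        rw [if_neg (by omega), if_neg (by omega)] at hs
        rw [hc, hs]
        refine ⟨⟨Or.inl rfl, ?_⟩, ?_⟩
        · intro hbad
          exact absurd hbad (by have := invCount_eta_cox_lt (w.get k); omega)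
        · simp only [lt_irrefl, false_iff]
          intro hk; rw [hk] at h; omega
  refine ⟨⟨?_, ?_, fun k => ((key k).1).1, fun k => ((key k).1).2⟩, ?_⟩
  · have hk0l : (k0:ℕ) < l := k0.isLt
    simp [canon]
  · simp only [canon, Fin.val_last]
    rw [if_neg (by have := k0.isLt; omega), if_neg (by have := k1.isLt; omega)]
  · ext k
    simp only [Finset.mem_filter, Finset.mem_univ, true_and, Finset.mem_singleton]
    exact (key k).2
end canon


/-- For a reduced word `w` of `σ ∈ S_{n+1}` with `l = inv(σ)` letters and
`b = block(σ)` blocks, the number of preancestries of dimension 1 is `l - n + b`. -/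
theorem count_one_dimensional_preancestries (n b : ℕ) (σ : Equiv.Perm (Fin (n+1)))
    (w : List (Fin n))
    (hw : (w.map cox).prod = σ)
    (hred : w.length = invCount σ)
    (hb : b = (Finset.univ.filter fun j : Fin n =>
      ∀ i : Fin (n+1), (i : ℕ) ≤ (j : ℕ) → ((σ i : ℕ) ≤ (j : ℕ))).card) :
    Nat.card {ρ : Fin (w.length + 1) → Equiv.Perm (Fin (n+1)) //
        IsPreancestry w ρ ∧ preDim w ρ = 1} = w.length + b - n := by
  classical
  -- the predicate "k has a later occurrence of the same letter"
  set Pk : Fin w.length → Prop :=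
    fun k => ∃ m : Fin w.length, (k:ℕ) < (m:ℕ) ∧ w.get m = w.get k with hPkdef
  -- Step 1 : the set of dim-1 preancestries is in bijection with {k // Pk k}
  have hchoose : ∀ x : {ρ : Fin (w.length + 1) → Equiv.Perm (Fin (n+1)) //
      IsPreancestry w ρ ∧ preDim w ρ = 1},
      ∃ k0 : Fin w.length, (Finset.univ.filter fun k : Fin w.length =>
        invCount (x.1 k.succ) < invCount (x.1 k.castSucc)) = {k0} := by
    intro x
    have h := x.2.2
    unfold preDim at h
    exact Finset.card_eq_one.mp h
  have hstep1 : Nat.card {ρ : Fin (w.length + 1) → Equiv.Perm (Fin (n+1)) //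
      IsPreancestry w ρ ∧ preDim w ρ = 1} = Nat.card {k : Fin w.length // Pk k} := by
    apply Nat.card_eq_of_bijective (fun x => ⟨(hchoose x).choose, by
      obtain ⟨k1, h1, h2, _, _⟩ := classify x.2.1 (hchoose x).choose_spec
      exact ⟨k1, h1, h2⟩⟩)
    constructor
    · rintro x y hxy
      have hk0 : (hchoose x).choose = (hchoose y).choose := congrArg Subtype.val hxy
      obtain ⟨k1x, hx1, hx2, hx3, hx4⟩ := classify x.2.1 (hchoose x).choose_spec
      obtain ⟨k1y, hy1, hy2, hy3, hy4⟩ := classify y.2.1 (hchoose y).choose_spec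
      rw [← hk0] at hy1 hy2 hy3 hy4
      set k0 := (hchoose x).choose with hk0def
      have hk1 : k1x = k1y := by
        rcases lt_trichotomy (k1x:ℕ) (k1y:ℕ) with h | h | h
        · exact absurd hx2 (hy3 k1x hx1 h)
        · exact Fin.ext h
        · exact absurd hy2 (hx3 k1y hy1 h)
      apply Subtype.ext
      funext m
      rw [hx4 m, hy4 m, hk1]
    · rintro ⟨k, hk⟩
      have hTne : (Finset.univ.filter
          (fun m : Fin w.length => (k:ℕ) < (m:ℕ) ∧ w.get m = w.get k)).Nonempty := by
        obtain ⟨m, hm1, hm2⟩ := hk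
        refine ⟨m, ?_⟩
        simp only [Finset.mem_filter, Finset.mem_univ, true_and]
        exact ⟨hm1, hm2⟩
      set k1 := (Finset.univ.filter
          (fun m : Fin w.length => (k:ℕ) < (m:ℕ) ∧ w.get m = w.get k)).min' hTne with hk1def
      have hk1mem := Finset.min'_mem _ hTne
      rw [← hk1def] at hk1mem
      simp only [Finset.mem_filter, Finset.mem_univ, true_and] at hk1mem
      obtain ⟨hk1gt, hk1occ⟩ := hk1mem
      have hk1min : ∀ m : Fin w.length, (k:ℕ) < (m:ℕ) → (m:ℕ) < (k1:ℕ) →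
          w.get m ≠ w.get k := by
        intro m hm1 hm2 hocc
        have hmem : m ∈ Finset.univ.filter
            (fun m : Fin w.length => (k:ℕ) < (m:ℕ) ∧ w.get m = w.get k) := by
          simp only [Finset.mem_filter, Finset.mem_univ, true_and]
          exact ⟨hm1, hocc⟩
        have := Finset.min'_le _ m hmem
        rw [← hk1def, Fin.le_iff_val_le_val] at this
        omega
      obtain ⟨hpre, hfilter⟩ := canon_spec w hk1gt hk1occ hk1min
      have hdim : preDim w (canon w k k1) = 1 := by
        unfold preDim
        rw [hfilter]
        exact Finset.card_singleton k
      refine ⟨⟨canon w k k1, hpre, hdim⟩, ?_⟩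
      apply Subtype.ext
      have hspec := (hchoose ⟨canon w k k1, hpre, hdim⟩).choose_spec
      show (hchoose ⟨canon w k k1, hpre, hdim⟩).choose = k
      exact Finset.singleton_injective (hspec.symm.trans hfilter)
  -- Step 2 : |{k // Pk k}| = l - d where d = number of distinct letters
  have hstep2 : Nat.card {k : Fin w.length // Pk k} =
      (Finset.univ.filter Pk).card := by
    rw [Nat.card_eq_fintype_card]
    exact Fintype.card_subtype _
  have hsplit : (Finset.univ.filter Pk).card +
      (Finset.univ.filter fun k => ¬ Pk k).card = w.length := by
    rw [Finset.card_filter_add_card_filter_not]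
    simp
  have hlast : (Finset.univ.filter fun k => ¬ Pk k).card = w.toFinset.card := by
    apply Finset.card_bij (fun k _ => w.get k)
    · intro k _
      exact List.mem_toFinset.2 (List.get_mem w k)
    · intro a ha a' ha' heq
      simp only [Finset.mem_filter, Finset.mem_univ, true_and, hPkdef] at ha ha'
      rcases lt_trichotomy (a:ℕ) (a':ℕ) with h | h | h
      · exact absurd ⟨a', h, heq.symm⟩ ha
      · exact Fin.ext h
      · exact absurd ⟨a, h, heq⟩ ha'
    · intro a ha
      rw [List.mem_toFinset] at ha
      obtain ⟨idx, hidx⟩ := List.mem_iff_get.1 ha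
      have hSne : (Finset.univ.filter (fun m : Fin w.length => w.get m = a)).Nonempty :=
        ⟨idx, by simp only [Finset.mem_filter, Finset.mem_univ, true_and]; exact hidx⟩
      set kk := (Finset.univ.filter (fun m : Fin w.length => w.get m = a)).max' hSne
        with hkkdef
      have hkkmem := Finset.max'_mem _ hSne
      rw [← hkkdef] at hkkmem
      simp only [Finset.mem_filter, Finset.mem_univ, true_and] at hkkmem
      refine ⟨kk, ?_, hkkmem⟩
      simp only [Finset.mem_filter, Finset.mem_univ, true_and, hPkdef]
      rintro ⟨m, hm1, hm2⟩
      have hmmem : m ∈ Finset.univ.filter (fun m : Fin w.length => w.get m = a) := by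
        simp only [Finset.mem_filter, Finset.mem_univ, true_and]
        rw [hm2, hkkmem]
      have := Finset.le_max' _ m hmmem
      rw [← hkkdef, Fin.le_iff_val_le_val] at this
      omega
  -- Step 3 : letters appearing in w are exactly the non-blocking rows
  have hredw : invCount (pre w w.length) = w.length := by
    unfold pre
    rw [List.take_length, hw, hred]
  have hBlk : (Finset.univ.filter fun j : Fin n =>
      ∀ i : Fin (n+1), (i : ℕ) ≤ (j : ℕ) → ((σ i : ℕ) ≤ (j : ℕ))) = w.toFinsetᶜ := by
    ext j
    simp only [Finset.mem_filter, Finset.mem_univ, true_and, Finset.mem_compl,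
      List.mem_toFinset]
    constructor
    · intro hblk hj
      have h1 := crossCount_pos_of_mem hredw hj
      have h2 : crossCount j (pre w w.length) = 0 := by
        apply crossCount_eq_zero_of_blk
        unfold pre
        rw [List.take_length, hw]
        exact hblk
      omega
    · intro hj i hi
      have := blk_of_not_mem j w hj i hi
      rw [hw] at this
      exact this
  have hcompl : w.toFinset.card + b = n := by
    have h1 := Finset.card_add_card_compl w.toFinset
    rw [← hBlk] at h1
    rw [hb]
    simpa using h1
  -- combine
  rw [hstep1, hstep2]
  omega
end

section
/- For n ≥ 2, let η ∈ S_{n+1} be the longest permutation. The largest possible dimension of a preancestry for η is d_max = ⌊n²/4⌋, and there is a unique preancestry of dimension d_max. -/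
namespace Pre
open Equiv Finset

variable {n : ℕ}

def invSet {m : ℕ} (σ : Equiv.Perm (Fin m)) : Finset (Fin m × Fin m) :=
  Finset.univ.filter fun p => p.1 < p.2 ∧ σ p.2 < σ p.1

lemma invCount_eq_card {m : ℕ} (σ : Equiv.Perm (Fin m)) : invCount σ = (invSet σ).card := rfl

lemma swap_lt_iff (i : Fin n) (p q : Fin (n+1)) :
    Equiv.swap i.castSucc i.succ p < Equiv.swap i.castSucc i.succ q ↔
      ((p < q ∧ ¬(p = i.castSucc ∧ q = i.succ)) ∨ (p = i.succ ∧ q = i.castSucc)) := by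
  have h1 : (i.castSucc : Fin (n+1)).val = i.val := rfl
  have h2 : (i.succ : Fin (n+1)).val = i.val + 1 := rfl
  simp only [Equiv.swap_apply_def, Fin.lt_def, Fin.ext_iff, h1, h2]
  have hp := p.isLt
  have hq := q.isLt
  split_ifs <;> omega

lemma swap_lt_swap {i : Fin n} {p q : Fin (n+1)} (hpq : p < q)
    (hne : ¬(p = i.castSucc ∧ q = i.succ)) :
    Equiv.swap i.castSucc i.succ p < Equiv.swap i.castSucc i.succ q :=
  (swap_lt_iff i p q).2 (Or.inl ⟨hpq, hne⟩)

lemma invCount_mul_cox_of_ascent {i : Fin n} {σ : Equiv.Perm (Fin (n+1))}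
    (h : σ i.castSucc < σ i.succ) :
    invCount (σ * cox i) = invCount σ + 1 := by
  classical
  set s := Equiv.swap i.castSucc i.succ with hs
  have happ : ∀ x, (σ * cox i) x = σ (s x) := fun x => rfl
  have key : invSet (σ * cox i) = insert (i.castSucc, i.succ)
      ((invSet σ).image fun p => (s p.1, s p.2)) := by
    ext ⟨p, q⟩
    simp only [invSet, Finset.mem_insert, Finset.mem_image, Finset.mem_filter, Finset.mem_univ,
      true_and, Prod.mk.injEq, Prod.exists]
    constructor
    · rintro ⟨hlt, hinv⟩
      by_cases hpq : p = i.castSucc ∧ q = i.succ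
      · exact Or.inl ⟨hpq.1, hpq.2⟩
      · refine Or.inr ⟨s p, s q, ⟨swap_lt_swap hlt hpq, ?_⟩, ?_, ?_⟩
        · simpa [Equiv.swap_apply_self, hs, cox] using hinv
        · simp [Equiv.swap_apply_self, hs]
        · simp [Equiv.swap_apply_self, hs]
    · rintro (⟨hp, hq⟩ | ⟨a, b, ⟨hab, hinv⟩, ha, hb⟩)
      · subst hp; subst hq
        refine ⟨(Fin.castSucc_lt_succ : i.castSucc < i.succ), ?_⟩
        rw [happ, happ, hs, Equiv.swap_apply_left, Equiv.swap_apply_right]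
        exact h
      · subst ha; subst hb
        have hne : ¬(a = i.castSucc ∧ b = i.succ) := by
          rintro ⟨rfl, rfl⟩
          exact absurd h (not_lt.2 hinv.le)
        refine ⟨swap_lt_swap hab hne, ?_⟩
        rw [happ, happ, hs, Equiv.swap_apply_self, Equiv.swap_apply_self]
        exact hinv
  have hinj : Function.Injective fun p : Fin (n+1) × Fin (n+1) => (s p.1, s p.2) := by
    intro a b hab
    simp only [Prod.mk.injEq] at hab
    exact Prod.ext (s.injective hab.1) (s.injective hab.2)
  have hnot : (i.castSucc, i.succ) ∉ (invSet σ).image fun p => (s p.1, s p.2) := by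
    simp only [Finset.mem_image, Prod.mk.injEq, Prod.exists, not_exists]
    rintro a b ⟨hmem, ha, hb⟩
    have ha' : a = i.succ := by
      have := congrArg s ha
      simpa [hs, Equiv.swap_apply_self, Equiv.swap_apply_left] using this
    have hb' : b = i.castSucc := by
      have := congrArg s hb
      simpa [hs, Equiv.swap_apply_self, Equiv.swap_apply_right] using this
    subst ha'; subst hb'
    simp only [invSet, Finset.mem_filter] at hmem
    exact absurd hmem.2.1 (not_lt.2 (Fin.castSucc_lt_succ : i.castSucc < i.succ).le)
  rw [invCount_eq_card, invCount_eq_card, key, Finset.card_insert_of_notMem hnot,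
    Finset.card_image_of_injective _ hinj]

lemma cox_mul_cox (i : Fin n) : cox i * cox i = 1 := Equiv.swap_mul_self _ _

lemma invCount_mul_cox_of_descent {i : Fin n} {σ : Equiv.Perm (Fin (n+1))}
    (h : σ i.succ < σ i.castSucc) :
    invCount σ = invCount (σ * cox i) + 1 := by
  have h2 : (σ * cox i) i.castSucc < (σ * cox i) i.succ := by
    have e1 : (σ * cox i) i.castSucc = σ i.succ := by
      simp [cox, Equiv.Perm.mul_apply, Equiv.swap_apply_left]
    have e2 : (σ * cox i) i.succ = σ i.castSucc := by
      simp [cox, Equiv.Perm.mul_apply, Equiv.swap_apply_right]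
    rw [e1, e2]; exact h
  have := invCount_mul_cox_of_ascent h2
  rwa [mul_assoc, cox_mul_cox, mul_one] at this

lemma cox_apply_ne (i : Fin n) (σ : Equiv.Perm (Fin (n+1))) :
    σ i.castSucc ≠ σ i.succ :=
  fun hc => absurd (σ.injective hc) (Fin.castSucc_lt_succ : i.castSucc < i.succ).ne


lemma card_lt_pairs (m : ℕ) :
    2 * (Finset.univ.filter fun p : Fin m × Fin m => p.1 < p.2).card = m * m - m := by
  classical
  set S := Finset.univ.filter fun p : Fin m × Fin m => p.1 < p.2 with hS
  set T := Finset.univ.filter fun p : Fin m × Fin m => p.2 < p.1 with hT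
  have hcard : S.card = T.card := by
    apply Finset.card_bij (fun p _ => (p.2, p.1))
    · intro p hp; simp only [hS, hT, Finset.mem_filter, Finset.mem_univ, true_and] at *; exact hp
    · intro a ha b hb hab
      simp only [Prod.mk.injEq] at hab
      exact Prod.ext hab.2 hab.1
    · intro p hp
      refine ⟨(p.2, p.1), ?_, rfl⟩
      simp only [hS, hT, Finset.mem_filter, Finset.mem_univ, true_and] at *; exact hp
  have hdisj : Disjoint S T := by
    rw [Finset.disjoint_left]
    intro p hp hp'
    simp only [hS, hT, Finset.mem_filter, Finset.mem_univ, true_and] at hp hp'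
    exact absurd hp' (not_lt.2 hp.le)
  have hunion : S ∪ T = Finset.univ.filter fun p : Fin m × Fin m => ¬(p.1 = p.2) := by
    ext p
    simp only [hS, hT, Finset.mem_union, Finset.mem_filter, Finset.mem_univ, true_and]
    constructor
    · rintro (h | h)
      · exact h.ne
      · exact h.ne'
    · intro h; exact lt_or_gt_of_ne h
  have hdiag : (Finset.univ.filter fun p : Fin m × Fin m => p.1 = p.2).card = m := by
    have himg : (Finset.univ.filter fun p : Fin m × Fin m => p.1 = p.2)
        = Finset.univ.image fun x : Fin m => (x, x) := by
      ext p
      simp only [Finset.mem_filter, Finset.mem_univ, true_and, Finset.mem_image, Prod.mk.injEq]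
      constructor
      · intro h; exact ⟨p.1, Prod.ext rfl h⟩
      · rintro ⟨x, rfl⟩; rfl
    rw [himg, Finset.card_image_of_injective]
    · simp
    · intro a b hab
      have := congrArg Prod.fst hab
      simpa using this
  have htot := Finset.card_filter_add_card_filter_not
    (s := (Finset.univ : Finset (Fin m × Fin m))) (p := fun p => p.1 = p.2)
  have hcu : (Finset.univ : Finset (Fin m × Fin m)).card = m * m := by simp
  have := Finset.card_union_of_disjoint hdisj
  rw [hunion] at this
  omega

lemma invCount_revPerm : 2 * invCount (Fin.revPerm : Equiv.Perm (Fin (n+1))) = (n+1) * n := by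
  have h : invCount (Fin.revPerm : Equiv.Perm (Fin (n+1)))
      = (Finset.univ.filter fun p : Fin (n+1) × Fin (n+1) => p.1 < p.2).card := by
    unfold invCount
    congr 1
    ext p
    simp only [Finset.mem_filter, Finset.mem_univ, true_and, Fin.revPerm_apply, Fin.rev_lt_rev]
    tauto
  rw [h, card_lt_pairs]
  have : (n+1) * (n+1) - (n+1) = (n+1) * n := by ring_nf; omega
  omega

lemma card_OP : (Finset.univ.filter fun j : Fin (n+1) => j < Fin.rev j).card = (n+1)/2 := by
  classical
  have hiff : ∀ j : Fin (n+1), (j < Fin.rev j) ↔ 2 * (j : ℕ) < n := by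
    intro j
    rw [Fin.lt_def, Fin.val_rev]
    omega
  rw [← Finset.card_range ((n+1)/2)]
  refine Finset.card_bij (fun j _ => (j : ℕ)) ?_ ?_ ?_
  · intro j hj
    simp only [Finset.mem_filter, Finset.mem_univ, true_and, hiff] at hj
    simp only [Finset.mem_range]
    omega
  · intro a _ b _ hab
    exact Fin.ext hab
  · intro b hb
    simp only [Finset.mem_range] at hb
    refine ⟨⟨b, by omega⟩, ?_, rfl⟩
    simp only [Finset.mem_filter, Finset.mem_univ, true_and, hiff]
    omega


variable {n : ℕ}

def pp (w : List (Fin n)) (k : ℕ) : Equiv.Perm (Fin (n+1)) := ((w.take k).map cox).prod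

lemma pp_zero (w : List (Fin n)) : pp w 0 = 1 := rfl

lemma pp_succ (w : List (Fin n)) (k : ℕ) (hk : k < w.length) :
    pp w (k+1) = pp w k * cox (w.get ⟨k, hk⟩) := by
  unfold pp
  rw [List.take_succ, List.getElem?_eq_getElem hk]
  rw [List.map_append, List.prod_append]
  simp [List.get_eq_getElem]

lemma pp_length (w : List (Fin n)) (hw : (w.map cox).prod = (Fin.revPerm : Equiv.Perm (Fin (n+1)))) :
    pp w w.length = Fin.revPerm := by
  unfold pp
  rw [List.take_length]
  exact hw

def wb (w : List (Fin n)) (k : Fin w.length) : Fin (n+1) := pp w k.val ((w.get k).castSucc)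
def wc (w : List (Fin n)) (k : Fin w.length) : Fin (n+1) := pp w k.val ((w.get k).succ)

section Word

variable (w : List (Fin n))
  (hw : (w.map cox).prod = (Fin.revPerm : Equiv.Perm (Fin (n+1))))
  (hred : w.length = invCount (Fin.revPerm : Equiv.Perm (Fin (n+1))))

lemma pp_step_bounds (k : ℕ) (hk : k < w.length) :
    invCount (pp w (k+1)) ≤ invCount (pp w k) + 1 ∧
    invCount (pp w k) ≤ invCount (pp w (k+1)) + 1 := by
  rw [pp_succ w k hk]
  set i := w.get ⟨k, hk⟩
  rcases lt_trichotomy (pp w k i.castSucc) (pp w k i.succ) with h | h | h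
  · rw [invCount_mul_cox_of_ascent h]; omega
  · exact absurd h (cox_apply_ne i (pp w k))
  · rw [invCount_mul_cox_of_descent h]; omega

include hw hred in
lemma invCount_pp (k : ℕ) (hk : k ≤ w.length) : invCount (pp w k) = k := by
  have hle : ∀ m, m ≤ w.length → invCount (pp w m) ≤ m := by
    intro m
    induction m with
    | zero =>
      intro _
      rw [pp_zero]
      have h0 : invCount (1 : Equiv.Perm (Fin (n+1))) = 0 := by
        unfold invCount
        rw [Finset.card_eq_zero, Finset.filter_eq_empty_iff]
        intro p _
        rintro ⟨h1, h2⟩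
        simp only [Equiv.Perm.one_apply] at h2
        exact absurd h2 (not_lt.2 h1.le)
      omega
    | succ m ih =>
      intro hm
      have h1 := (pp_step_bounds w m (by omega)).1
      have := ih (by omega)
      omega
  have hge : ∀ j k, k + j = w.length → w.length ≤ invCount (pp w k) + j := by
    intro j
    induction j with
    | zero =>
      intro k hkj
      have : k = w.length := by omega
      subst this
      rw [pp_length w hw, ← hred]
      omega
    | succ j ih =>
      intro k hkj
      have h1 := ih (k+1) (by omega)
      have h2 := (pp_step_bounds w k (by omega)).1
      omega
  have := hle k hk
  have := hge (w.length - k) k (by omega)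
  omega

include hw hred in
lemma wb_lt_wc (k : Fin w.length) : wb w k < wc w k := by
  by_contra hcon
  have hne := cox_apply_ne (w.get k) (pp w k.val)
  have hdesc : pp w k.val (w.get k).succ < pp w k.val (w.get k).castSucc := by
    unfold wb wc at hcon
    rcases lt_trichotomy (pp w k.val (w.get k).castSucc) (pp w k.val (w.get k).succ) with h | h | h
    · exact absurd h hcon
    · exact absurd h hne
    · exact h
  have hstep : invCount (pp w k.val) = invCount (pp w (k.val+1)) + 1 := by
    rw [pp_succ w k.val k.isLt]
    exact invCount_mul_cox_of_descent hdesc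
  rw [invCount_pp w hw hred k.val (le_of_lt k.isLt),
      invCount_pp w hw hred (k.val+1) k.isLt] at hstep
  omega

end Word

def vinv (σ : Equiv.Perm (Fin (n+1))) : Finset (Fin (n+1) × Fin (n+1)) :=
  Finset.univ.filter fun p => p.1 < p.2 ∧ σ⁻¹ p.2 < σ⁻¹ p.1

section Word2

variable (w : List (Fin n))
  (hw : (w.map cox).prod = (Fin.revPerm : Equiv.Perm (Fin (n+1))))
  (hred : w.length = invCount (Fin.revPerm : Equiv.Perm (Fin (n+1))))

include hw hred in
lemma vinv_step (k : Fin w.length) :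
    vinv (pp w (k.val+1)) = insert (wb w k, wc w k) (vinv (pp w k.val)) ∧
    (wb w k, wc w k) ∉ vinv (pp w k.val) := by
  classical
  set π := pp w k.val with hπ
  set i := w.get k with hi
  have hbc : wb w k < wc w k := wb_lt_wc w hw hred k
  have hgetk : w.get ⟨k.val, k.isLt⟩ = i := rfl
  have hppk : pp w (k.val + 1) = π * cox i := by rw [pp_succ w k.val k.isLt, hgetk, hπ]
  have hinvapp : ∀ x, (pp w (k.val+1))⁻¹ x = Equiv.swap i.castSucc i.succ (π⁻¹ x) := by
    intro x
    rw [hppk, mul_inv_rev]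
    have : (cox i)⁻¹ = cox i := by
      rw [cox]; exact Equiv.swap_inv _ _
    rw [this]
    rfl
  have hbinv : π⁻¹ (wb w k) = i.castSucc := by
    rw [wb, ← hgetk, ← hπ]
    simp [hgetk]
  have hcinv : π⁻¹ (wc w k) = i.succ := by
    rw [wc, ← hgetk, ← hπ]
    simp [hgetk]
  have hmemiff : ∀ b c : Fin (n+1),
      ((b, c) ∈ vinv (pp w (k.val+1))) ↔
        (b, c) = (wb w k, wc w k) ∨ (b, c) ∈ vinv π := by
    intro b c
    simp only [vinv, Finset.mem_filter, Finset.mem_univ, true_and, hinvapp, Prod.mk.injEq]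
    rw [swap_lt_iff]
    have e1 : (π⁻¹ c = i.castSucc) ↔ c = wb w k := by
      rw [← hbinv]
      exact ⟨fun h => π⁻¹.injective h, fun h => by rw [h]⟩
    have e2 : (π⁻¹ b = i.succ) ↔ b = wc w k := by
      rw [← hcinv]
      exact ⟨fun h => π⁻¹.injective h, fun h => by rw [h]⟩
    have e3 : (π⁻¹ c = i.succ) ↔ c = wc w k := by
      rw [← hcinv]
      exact ⟨fun h => π⁻¹.injective h, fun h => by rw [h]⟩
    have e4 : (π⁻¹ b = i.castSucc) ↔ b = wb w k := by
      rw [← hbinv]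
      exact ⟨fun h => π⁻¹.injective h, fun h => by rw [h]⟩
    rw [e1, e2, e3, e4]
    constructor
    · rintro ⟨hbc', (⟨hlt, hne⟩ | ⟨hcw, hbw⟩)⟩
      · exact Or.inr ⟨hbc', hlt⟩
      · exact Or.inl ⟨hbw, hcw⟩
    · rintro (⟨hb, hc⟩ | ⟨hbc', hlt⟩)
      · subst hb; subst hc
        refine ⟨hbc, Or.inr ⟨rfl, rfl⟩⟩
      · refine ⟨hbc', Or.inl ⟨hlt, ?_⟩⟩
        rintro ⟨hcw, hbw⟩
        rw [hcw, hbw] at hbc'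
        exact absurd hbc' (not_lt.2 hbc.le)
  have hnot : (wb w k, wc w k) ∉ vinv π := by
    simp only [vinv, Finset.mem_filter, Finset.mem_univ, true_and, hbinv, hcinv, not_and]
    intro _
    exact not_lt.2 (Fin.castSucc_lt_succ : i.castSucc < i.succ).le
  constructor
  · ext ⟨b, c⟩
    rw [hmemiff b c, Finset.mem_insert]
  · exact hnot

include hw hred in
lemma wbc_mem_vinv : ∀ m, m ≤ w.length → ∀ j : Fin w.length, j.val < m →
    (wb w j, wc w j) ∈ vinv (pp w m) := by
  intro m
  induction m with
  | zero => intro _ j hj; omega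
  | succ m ih =>
    intro hm j hj
    have hmlt : m < w.length := by omega
    have hstep := vinv_step w hw hred ⟨m, hmlt⟩
    simp only at hstep
    rw [hstep.1]
    rcases Nat.lt_or_ge j.val m with h | h
    · exact Finset.mem_insert_of_mem (ih (by omega) j h)
    · have hjm : j.val = m := by omega
      have : j = ⟨m, hmlt⟩ := Fin.ext hjm
      subst this
      exact Finset.mem_insert_self _ _

include hw hred in
lemma wbc_ne (j k : Fin w.length) (hlt : j.val < k.val) :
    (wb w j, wc w j) ≠ (wb w k, wc w k) := by
  intro heq
  have hmem := wbc_mem_vinv w hw hred k.val (le_of_lt k.isLt) j hlt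
  have hnot := (vinv_step w hw hred k).2
  rw [heq] at hmem
  exact hnot hmem

include hw hred in
lemma wbc_injective : Function.Injective
    (fun k : Fin w.length => (wb w k, wc w k)) := by
  intro j k hjk
  simp only at hjk
  by_contra hne
  have hne' : j.val ≠ k.val := fun h => hne (Fin.ext h)
  rcases Nat.lt_or_ge j.val k.val with h | h
  · exact wbc_ne w hw hred j k h hjk
  · exact wbc_ne w hw hred k j (by omega) hjk.symm

include hw hred in
lemma wbc_surjective (b c : Fin (n+1)) (hbc : b < c) :
    ∃ k : Fin w.length, wb w k = b ∧ wc w k = c := by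
  classical
  let f : Fin w.length → {p : Fin (n+1) × Fin (n+1) // p.1 < p.2} :=
    fun k => ⟨(wb w k, wc w k), wb_lt_wc w hw hred k⟩
  have hfinj : Function.Injective f := by
    intro j k hjk
    apply wbc_injective w hw hred
    exact congrArg Subtype.val hjk
  have hcard : Fintype.card {p : Fin (n+1) × Fin (n+1) // p.1 < p.2} = w.length := by
    rw [Fintype.card_subtype]
    have h : invCount (Fin.revPerm : Equiv.Perm (Fin (n+1)))
        = (Finset.univ.filter fun p : Fin (n+1) × Fin (n+1) => p.1 < p.2).card := by
      unfold invCount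
      congr 1
      ext p
      simp only [Finset.mem_filter, Finset.mem_univ, true_and, Fin.revPerm_apply, Fin.rev_lt_rev]
      tauto
    omega
  have hbij : Function.Bijective f := by
    rw [Fintype.bijective_iff_injective_and_card]
    exact ⟨hfinj, by rw [hcard, Fintype.card_fin]⟩
  obtain ⟨k, hk⟩ := hbij.2 ⟨(b, c), hbc⟩
  refine ⟨k, ?_, ?_⟩
  · have := congrArg (fun p => p.val.1) hk; exact this
  · have := congrArg (fun p => p.val.2) hk; exact this

end Word2

section Anc

variable (w : List (Fin n))
  (ρ : Fin (w.length + 1) → Equiv.Perm (Fin (n+1)))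

def EqS : Finset (Fin w.length) :=
  Finset.univ.filter fun k => invCount (ρ k.succ) = invCount (ρ k.castSucc)

def US : Finset (Fin w.length) :=
  Finset.univ.filter fun k => invCount (ρ k.castSucc) < invCount (ρ k.succ)

def DS : Finset (Fin w.length) :=
  Finset.univ.filter fun k => invCount (ρ k.succ) < invCount (ρ k.castSucc)

variable (hρ : IsPreancestry w ρ)

include hρ in
lemma step_trichotomy (k : Fin w.length) :
    (ρ k.succ = ρ k.castSucc ∧ invCount (ρ k.succ) = invCount (ρ k.castSucc)) ∨
    (ρ k.succ = ρ k.castSucc * cox (w.get k) ∧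
      invCount (ρ k.succ) = invCount (ρ k.castSucc) + 1) ∨
    (ρ k.succ = ρ k.castSucc * cox (w.get k) ∧
      invCount (ρ k.castSucc) = invCount (ρ k.succ) + 1) := by
  rcases hρ.2.2.1 k with h | h
  · exact Or.inl ⟨h, by rw [h]⟩
  · rcases lt_trichotomy (ρ k.castSucc ((w.get k).castSucc)) (ρ k.castSucc ((w.get k).succ))
      with ha | ha | ha
    · refine Or.inr (Or.inl ⟨h, ?_⟩)
      rw [h, invCount_mul_cox_of_ascent ha]
    · exact absurd ha (cox_apply_ne (w.get k) (ρ k.castSucc))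
    · refine Or.inr (Or.inr ⟨h, ?_⟩)
      rw [h, ← invCount_mul_cox_of_descent ha]

include hρ in
lemma eqS_iff_stay (k : Fin w.length) :
    k ∈ EqS w ρ ↔ ρ k.succ = ρ k.castSucc := by
  unfold EqS
  simp only [Finset.mem_filter, Finset.mem_univ, true_and]
  constructor
  · intro h
    rcases step_trichotomy w ρ hρ k with ⟨h1, _⟩ | ⟨_, h2⟩ | ⟨_, h2⟩
    · exact h1
    · omega
    · omega
  · intro h; rw [h]

include hρ in
lemma move_of_not_eqS (k : Fin w.length) (hk : k ∉ EqS w ρ) :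
    ρ k.succ = ρ k.castSucc * cox (w.get k) := by
  rcases hρ.2.2.1 k with h | h
  · exact absurd ((eqS_iff_stay w ρ hρ k).2 h) hk
  · exact h

lemma card_partition :
    (US w ρ).card + (DS w ρ).card + (EqS w ρ).card = w.length := by
  classical
  have hU : Disjoint (US w ρ) (DS w ρ) := by
    rw [Finset.disjoint_left]
    intro k hk hk'
    simp only [US, DS, Finset.mem_filter, Finset.mem_univ, true_and] at hk hk'
    omega
  have hUD : Disjoint (US w ρ ∪ DS w ρ) (EqS w ρ) := by
    rw [Finset.disjoint_left]
    intro k hk hk'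
    simp only [US, DS, EqS, Finset.mem_union, Finset.mem_filter, Finset.mem_univ, true_and]
      at hk hk'
    omega
  have huniv : (US w ρ ∪ DS w ρ) ∪ EqS w ρ = Finset.univ := by
    ext k
    simp only [US, DS, EqS, Finset.mem_union, Finset.mem_filter, Finset.mem_univ, true_and,
      iff_true]
    omega
  have := congrArg Finset.card huniv
  rw [Finset.card_union_of_disjoint hUD, Finset.card_union_of_disjoint hU] at this
  simpa using this

include hρ in
lemma card_up_eq_down : (US w ρ).card = (DS w ρ).card := by
  classical
  let F : ℕ → ℤ := fun m => (invCount (ρ ⟨min m w.length, by omega⟩) : ℤ)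
  have hFcast : ∀ k : Fin w.length, F k.val = (invCount (ρ k.castSucc) : ℤ) := by
    intro k
    have h : (⟨min k.val w.length, by omega⟩ : Fin (w.length+1)) = k.castSucc := by
      apply Fin.ext
      simp only [Fin.coe_castSucc]
      have := k.isLt
      omega
    simp only [F, h]
  have hFsucc : ∀ k : Fin w.length, F (k.val + 1) = (invCount (ρ k.succ) : ℤ) := by
    intro k
    have h : (⟨min (k.val+1) w.length, by omega⟩ : Fin (w.length+1)) = k.succ := by
      apply Fin.ext
      simp only [Fin.val_succ]
      have := k.isLt
      omega
    simp only [F, h]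
  have htel : ∑ j ∈ Finset.range w.length, (F (j+1) - F j) = F w.length - F 0 :=
    Finset.sum_range_sub F w.length
  have hF0 : F 0 = (invCount (Fin.revPerm : Equiv.Perm (Fin (n+1))) : ℤ) := by
    have h0 : (⟨min 0 w.length, by omega⟩ : Fin (w.length+1)) = 0 := by
      apply Fin.ext; simp
    simp only [F, h0, hρ.1]
  have hFl : F w.length = (invCount (Fin.revPerm : Equiv.Perm (Fin (n+1))) : ℤ) := by
    have h0 : (⟨min w.length w.length, by omega⟩ : Fin (w.length+1)) = Fin.last w.length := by
      apply Fin.ext; simp [Fin.last]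
    simp only [F, h0, hρ.2.1]
  have hzero : ∑ j ∈ Finset.range w.length, (F (j+1) - F j) = 0 := by
    rw [htel, hF0, hFl]; ring
  have hfin : ∑ k : Fin w.length, (F (k.val+1) - F k.val)
      = ∑ j ∈ Finset.range w.length, (F (j+1) - F j) :=
    Fin.sum_univ_eq_sum_range (fun j => F (j+1) - F j) w.length
  have hsum : ∑ k : Fin w.length, (F (k.val+1) - F k.val)
      = ∑ k : Fin w.length,
          ((if k ∈ US w ρ then (1:ℤ) else 0) - (if k ∈ DS w ρ then (1:ℤ) else 0)) := by
    apply Finset.sum_congr rfl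
    intro k _
    rw [hFsucc, hFcast]
    rcases step_trichotomy w ρ hρ k with ⟨_, h2⟩ | ⟨_, h2⟩ | ⟨_, h2⟩
    · have hU : k ∉ US w ρ := by simp only [US, Finset.mem_filter, Finset.mem_univ, true_and]; omega
      have hD : k ∉ DS w ρ := by simp only [DS, Finset.mem_filter, Finset.mem_univ, true_and]; omega
      rw [if_neg hU, if_neg hD]; push_cast; omega
    · have hU : k ∈ US w ρ := by simp only [US, Finset.mem_filter, Finset.mem_univ, true_and]; omega
      have hD : k ∉ DS w ρ := by simp only [DS, Finset.mem_filter, Finset.mem_univ, true_and]; omega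
      rw [if_pos hU, if_neg hD]; push_cast; omega
    · have hU : k ∉ US w ρ := by simp only [US, Finset.mem_filter, Finset.mem_univ, true_and]; omega
      have hD : k ∈ DS w ρ := by simp only [DS, Finset.mem_filter, Finset.mem_univ, true_and]; omega
      rw [if_neg hU, if_pos hD]; push_cast; omega
  have hsplit : ∑ k : Fin w.length,
      ((if k ∈ US w ρ then (1:ℤ) else 0) - (if k ∈ DS w ρ then (1:ℤ) else 0))
      = ((US w ρ).card : ℤ) - ((DS w ρ).card : ℤ) := by
    rw [Finset.sum_sub_distrib]
    congr 1
    · rw [Finset.sum_ite_mem, Finset.univ_inter, Finset.sum_const, nsmul_eq_mul, mul_one]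
    · rw [Finset.sum_ite_mem, Finset.univ_inter, Finset.sum_const, nsmul_eq_mul, mul_one]
  have : ((US w ρ).card : ℤ) - ((DS w ρ).card : ℤ) = 0 := by
    rw [← hsplit, ← hsum, hfin, hzero]
  omega

include hρ in
lemma dim_formula : 2 * preDim w ρ + (EqS w ρ).card = w.length := by
  have h1 := card_partition w ρ
  have h2 := card_up_eq_down w ρ hρ
  have h3 : preDim w ρ = (DS w ρ).card := rfl
  omega

end Anc

/-! ### Linear algebra of stay edges -/

def evec (x : Fin (n+1)) : Fin (n+1) → ℚ := Pi.single x 1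

def vvec (b c : Fin (n+1)) : Fin (n+1) → ℚ := evec b - evec c

lemma vvec_apply (b c y : Fin (n+1)) :
    vvec b c y = (if y = b then (1:ℚ) else 0) - (if y = c then (1:ℚ) else 0) := by
  simp [vvec, evec, Pi.single_apply]

def negrevSub : Submodule ℚ (Fin (n+1) → ℚ) where
  carrier := {v | ∀ x, v (Fin.rev x) = - v x}
  add_mem' := by
    intro a b ha hb x
    simp only [Pi.add_apply, ha x, hb x]
    ring
  zero_mem' := by intro x; simp
  smul_mem' := by
    intro c v hv x
    simp only [Pi.smul_apply, hv x, smul_eq_mul]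
    ring

lemma mem_negrevSub {v : Fin (n+1) → ℚ} :
    v ∈ negrevSub (n := n) ↔ ∀ x, v (Fin.rev x) = - v x := Iff.rfl

lemma vvec_rev_mem_negrevSub (j : Fin (n+1)) :
    vvec j (Fin.rev j) ∈ negrevSub (n := n) := by
  rw [mem_negrevSub]
  intro x
  rw [vvec_apply, vvec_apply]
  have h1 : (Fin.rev x = j) ↔ (x = Fin.rev j) := by
    constructor
    · intro h; rw [← h, Fin.rev_rev]
    · intro h; rw [h, Fin.rev_rev]
  have h2 : (Fin.rev x = Fin.rev j) ↔ (x = j) := Fin.rev_inj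
  rw [if_congr h1 rfl rfl, if_congr h2 rfl rfl]
  ring

def WOP : Submodule ℚ (Fin (n+1) → ℚ) :=
  Submodule.span ℚ (Set.range fun j : {j : Fin (n+1) // j < Fin.rev j} =>
    vvec j.1 (Fin.rev j.1))

lemma vvec_rev_mem_WOP {j : Fin (n+1)} (hj : j < Fin.rev j) :
    vvec j (Fin.rev j) ∈ WOP (n := n) :=
  Submodule.subset_span ⟨⟨j, hj⟩, rfl⟩

lemma WOP_le_negrevSub : WOP (n := n) ≤ negrevSub := by
  rw [WOP, Submodule.span_le]
  rintro v ⟨j, rfl⟩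
  exact vvec_rev_mem_negrevSub j.1

lemma linIndepOP : LinearIndependent ℚ
    (fun j : {j : Fin (n+1) // j < Fin.rev j} => vvec j.1 (Fin.rev j.1)) := by
  rw [linearIndependent_iff']
  intro s g hsum j hj
  have hface := congrFun hsum j.1
  rw [Finset.sum_apply] at hface
  rw [Finset.sum_eq_single j] at hface
  · have hne : j.1 ≠ Fin.rev j.1 := j.2.ne
    rw [Pi.smul_apply, vvec_apply, if_pos rfl, if_neg hne, smul_eq_mul] at hface
    simpa using hface
  · intro i _ hij
    rw [Pi.smul_apply, vvec_apply, if_neg, if_neg]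
    · simp
    · intro h
      have h2 : i.1 = Fin.rev j.1 := by rw [h, Fin.rev_rev]
      have := i.2
      rw [h2, Fin.rev_rev] at this
      exact absurd (lt_trans j.2 this) (lt_irrefl _)
    · intro h
      exact hij (Subtype.ext h.symm)
  · intro h; exact absurd hj h

lemma finrank_WOP : Module.finrank ℚ (WOP (n := n)) = (n+1)/2 := by
  rw [WOP, finrank_span_eq_card linIndepOP, Fintype.card_subtype, card_OP]

section Span

variable (w : List (Fin n))
  (hw : (w.map cox).prod = (Fin.revPerm : Equiv.Perm (Fin (n+1))))
  (hred : w.length = invCount (Fin.revPerm : Equiv.Perm (Fin (n+1))))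
  (ρ : Fin (w.length + 1) → Equiv.Perm (Fin (n+1)))
  (hρ : IsPreancestry w ρ)

def stayEdges : Finset (Fin (n+1) → ℚ) :=
  (EqS w ρ).image fun k => vvec (wb w k) (wc w k)

include hw hred hρ in
lemma claim_span : ∀ x : Fin (n+1),
    vvec x (Fin.rev x) ∈ Submodule.span ℚ ((stayEdges w ρ : Set (Fin (n+1) → ℚ))) := by
  classical
  set T := Submodule.span ℚ ((stayEdges w ρ : Set (Fin (n+1) → ℚ))) with hT
  let R : ℕ → Equiv.Perm (Fin (n+1)) := fun m => ρ ⟨min m w.length, by omega⟩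
  have hRcast : ∀ k : Fin w.length, R k.val = ρ k.castSucc := by
    intro k
    have h : (⟨min k.val w.length, by omega⟩ : Fin (w.length+1)) = k.castSucc := by
      apply Fin.ext; simp only [Fin.coe_castSucc]; have := k.isLt; omega
    simp only [R, h]
  have hRsucc : ∀ k : Fin w.length, R (k.val + 1) = ρ k.succ := by
    intro k
    have h : (⟨min (k.val+1) w.length, by omega⟩ : Fin (w.length+1)) = k.succ := by
      apply Fin.ext; simp only [Fin.val_succ]; have := k.isLt; omega
    simp only [R, h]
  let φ : ℕ → Equiv.Perm (Fin (n+1)) :=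
    fun m => (Fin.revPerm : Equiv.Perm (Fin (n+1)))⁻¹ * R m * (pp w m)⁻¹
  have hmain : ∀ m, m ≤ w.length → ∀ x, vvec x (φ m x) ∈ T := by
    intro m
    induction m with
    | zero =>
      intro _ x
      have h0 : (⟨min 0 w.length, by omega⟩ : Fin (w.length+1)) = 0 := by
        apply Fin.ext; simp
      have hφ : φ 0 = 1 := by
        simp only [φ, R, h0, hρ.1, pp_zero]
        group
      rw [hφ]
      simp only [Equiv.Perm.one_apply]
      rw [show vvec x x = 0 by simp [vvec]]
      exact Submodule.zero_mem T
    | succ m ih =>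
      intro hm x
      have hmlt : m < w.length := by omega
      set k : Fin w.length := ⟨m, hmlt⟩ with hk
      have hppstep : pp w (m+1) = pp w m * cox (w.get k) := pp_succ w m hmlt
      by_cases hstay : k ∈ EqS w ρ
      · -- stay step
        have hRstep : R (m+1) = R m := by
          rw [show (m+1) = k.val + 1 from rfl, hRsucc, (eqS_iff_stay w ρ hρ k).1 hstay,
            ← hRcast]
        have hφstep : φ (m+1) = φ m * Equiv.swap (wb w k) (wc w k) := by
          have hswap : Equiv.swap (wb w k) (wc w k)
              = pp w m * cox (w.get k) * (pp w m)⁻¹ := by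
            rw [wb, wc, cox]
            exact Equiv.swap_apply_apply (pp w m) _ _
          simp only [φ, hRstep, hppstep, hswap]
          rw [mul_inv_rev, show (cox (w.get k))⁻¹ = cox (w.get k) from Equiv.swap_inv _ _]
          group
        have hx : φ (m+1) x = φ m (Equiv.swap (wb w k) (wc w k) x) := by
          rw [hφstep]; rfl
        have hdecomp : vvec x (φ (m+1) x)
            = vvec x (Equiv.swap (wb w k) (wc w k) x)
              + vvec (Equiv.swap (wb w k) (wc w k) x) (φ m (Equiv.swap (wb w k) (wc w k) x)) := by
          rw [hx]
          simp only [vvec]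
          abel
        rw [hdecomp]
        refine Submodule.add_mem T ?_ (ih (by omega) _)
        by_cases hxb : x = wb w k
        · subst hxb
          rw [Equiv.swap_apply_left]
          refine Submodule.subset_span ?_
          exact Finset.mem_coe.2 (Finset.mem_image_of_mem _ hstay)
        · by_cases hxc : x = wc w k
          · subst hxc
            rw [Equiv.swap_apply_right]
            have : vvec (wc w k) (wb w k) = - vvec (wb w k) (wc w k) := by
              simp only [vvec]; abel
            rw [this]
            refine Submodule.neg_mem T ?_
            exact Submodule.subset_span (Finset.mem_coe.2 (Finset.mem_image_of_mem _ hstay))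
          · rw [Equiv.swap_apply_of_ne_of_ne hxb hxc]
            rw [show vvec x x = 0 by simp [vvec]]
            exact Submodule.zero_mem T
      · -- move step
        have hRstep : R (m+1) = R m * cox (w.get k) := by
          rw [show (m+1) = k.val + 1 from rfl, hRsucc, move_of_not_eqS w ρ hρ k hstay, ← hRcast]
        have hφstep : φ (m+1) = φ m := by
          simp only [φ, hRstep, hppstep]
          rw [mul_inv_rev]
          group
        rw [hφstep]
        exact ih (by omega) x
  intro x
  have hφl : φ w.length = Fin.revPerm := by
    have hl : (⟨min w.length w.length, by omega⟩ : Fin (w.length+1)) = Fin.last w.length := by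
      apply Fin.ext; simp [Fin.last]
    simp only [φ, R, hl, hρ.2.1, pp_length w hw]
    rw [show (Fin.revPerm : Equiv.Perm (Fin (n+1)))⁻¹ = Fin.revPerm by
      rw [Equiv.Perm.inv_def, Fin.revPerm_symm]]
    rw [show (Fin.revPerm : Equiv.Perm (Fin (n+1))) * Fin.revPerm = 1 by
      ext y; simp [Equiv.Perm.mul_apply]]
    group
  have := hmain w.length le_rfl x
  rw [hφl] at this
  simpa [Fin.revPerm_apply] using this

include hw hred hρ in
lemma card_EqS_ge : (n+1)/2 ≤ (EqS w ρ).card := by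
  classical
  have hle : WOP (n := n) ≤ Submodule.span ℚ ((stayEdges w ρ : Set (Fin (n+1) → ℚ))) := by
    rw [WOP, Submodule.span_le]
    rintro v ⟨j, rfl⟩
    exact claim_span w hw hred ρ hρ j.1
  have h1 : Module.finrank ℚ (WOP (n := n))
      ≤ Module.finrank ℚ (Submodule.span ℚ ((stayEdges w ρ : Set (Fin (n+1) → ℚ)))) :=
    Submodule.finrank_mono hle
  have h2 : Module.finrank ℚ (Submodule.span ℚ ((stayEdges w ρ : Set (Fin (n+1) → ℚ))))
      ≤ (stayEdges w ρ).card := finrank_span_finset_le_card _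
  have h3 : (stayEdges w ρ).card ≤ (EqS w ρ).card := Finset.card_image_le
  rw [finrank_WOP] at h1
  omega

include hw hred hρ in
lemma eq_case (heq : (EqS w ρ).card = (n+1)/2) :
    (∀ k ∈ EqS w ρ, wc w k = Fin.rev (wb w k)) ∧
    (∀ j : Fin (n+1), j < Fin.rev j → ∃ k ∈ EqS w ρ, wb w k = j) := by
  classical
  set T := Submodule.span ℚ ((stayEdges w ρ : Set (Fin (n+1) → ℚ))) with hT
  have hle : WOP (n := n) ≤ T := by
    rw [WOP, Submodule.span_le]
    rintro v ⟨j, rfl⟩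
    exact claim_span w hw hred ρ hρ j.1
  have h2 : Module.finrank ℚ T ≤ (stayEdges w ρ).card := finrank_span_finset_le_card _
  have h3 : (stayEdges w ρ).card ≤ (EqS w ρ).card := Finset.card_image_le
  have hWT : WOP (n := n) = T := by
    apply Submodule.eq_of_le_of_finrank_le hle
    rw [finrank_WOP]
    omega
  have hpart1 : ∀ k ∈ EqS w ρ, wc w k = Fin.rev (wb w k) := by
    intro k hk
    have hmem : vvec (wb w k) (wc w k) ∈ T :=
      Submodule.subset_span (Finset.mem_coe.2 (Finset.mem_image_of_mem _ hk))
    rw [← hWT] at hmem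
    have hneg := WOP_le_negrevSub hmem
    rw [mem_negrevSub] at hneg
    have hbc : wb w k < wc w k := wb_lt_wc w hw hred k
    have hv := hneg (wb w k)
    rw [vvec_apply, vvec_apply, if_pos rfl, if_neg hbc.ne] at hv
    by_cases h : Fin.rev (wb w k) = wc w k
    · exact h.symm
    · rw [if_neg h] at hv
      by_cases h2 : Fin.rev (wb w k) = wb w k
      · rw [if_pos h2] at hv; norm_num at hv
      · rw [if_neg h2] at hv; norm_num at hv
  refine ⟨hpart1, ?_⟩
  intro j hj
  by_contra hcon
  push_neg at hcon
  have hker : T ≤ LinearMap.ker (LinearMap.proj (R := ℚ) (φ := fun _ : Fin (n+1) => ℚ) j) := by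
    rw [hT, Submodule.span_le]
    intro v hv
    rw [Finset.mem_coe, stayEdges, Finset.mem_image] at hv
    obtain ⟨k, hk, rfl⟩ := hv
    rw [SetLike.mem_coe, LinearMap.mem_ker, LinearMap.proj_apply]
    have hb : wb w k ≠ j := fun h => hcon k hk h
    have hc : wc w k ≠ j := by
      intro h
      have hrev := hpart1 k hk
      have h1 : Fin.rev (wb w k) = j := by rw [← hrev, h]
      have hwb : wb w k = Fin.rev j := by rw [← h1, Fin.rev_rev]
      have hbc : wb w k < wc w k := wb_lt_wc w hw hred k
      rw [hwb, h] at hbc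
      exact absurd hbc (not_lt.2 hj.le)
    rw [vvec_apply, if_neg (Ne.symm hb), if_neg (Ne.symm hc)]
    ring
  have hmem : vvec j (Fin.rev j) ∈ T := by rw [← hWT]; exact vvec_rev_mem_WOP hj
  have := hker hmem
  rw [LinearMap.mem_ker, LinearMap.proj_apply, vvec_apply, if_pos rfl, if_neg hj.ne] at this
  norm_num at this

end Span

/-! ### Arithmetic helpers -/

lemma arith_le (N L s d : ℕ) (h1 : 2*L = (N+1)*N) (h2 : 2*d + s = L) (h3 : (N+1)/2 ≤ s) :
    d ≤ N^2/4 := by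
  rcases Nat.even_or_odd N with ⟨a, ha⟩ | ⟨a, ha⟩
  · subst ha
    have e1 : (a+a+1)*(a+a) = 4*(a*a) + 2*a := by ring
    have e2 : (a+a)^2 = 4*(a*a) := by ring
    have key : ∀ A : ℕ, (a+a+1)*(a+a) = 4*A+2*a → (a+a)^2 = 4*A → d ≤ (a+a)^2/4 := by
      intro A h4 h5
      omega
    exact key (a*a) e1 e2
  · subst ha
    have e1 : (2*a+1+1)*(2*a+1) = 4*(a*a) + 6*a + 2 := by ring
    have e2 : (2*a+1)^2 = 4*(a*a) + 4*a + 1 := by ring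
    have key : ∀ A : ℕ, (2*a+1+1)*(2*a+1) = 4*A+6*a+2 → (2*a+1)^2 = 4*A+4*a+1 →
        d ≤ (2*a+1)^2/4 := by
      intro A h4 h5
      omega
    exact key (a*a) e1 e2

lemma arith_eq (N L s d : ℕ) (h1 : 2*L = (N+1)*N) (h2 : 2*d + s = L) (h3 : (N+1)/2 ≤ s)
    (h4 : d = N^2/4) : s = (N+1)/2 := by
  rcases Nat.even_or_odd N with ⟨a, ha⟩ | ⟨a, ha⟩
  · subst ha
    have e1 : (a+a+1)*(a+a) = 4*(a*a) + 2*a := by ring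
    have e2 : (a+a)^2 = 4*(a*a) := by ring
    have key : ∀ A : ℕ, (a+a+1)*(a+a) = 4*A+2*a → (a+a)^2 = 4*A → d = (a+a)^2/4 →
        s = (a+a+1)/2 := by
      intro A h5 h6 h7
      omega
    exact key (a*a) e1 e2 h4
  · subst ha
    have e1 : (2*a+1+1)*(2*a+1) = 4*(a*a) + 6*a + 2 := by ring
    have e2 : (2*a+1)^2 = 4*(a*a) + 4*a + 1 := by ring
    have key : ∀ A : ℕ, (2*a+1+1)*(2*a+1) = 4*A+6*a+2 → (2*a+1)^2 = 4*A+4*a+1 →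
        d = (2*a+1)^2/4 → s = (2*a+1+1)/2 := by
      intro A h5 h6 h7
      omega
    exact key (a*a) e1 e2 h4

lemma arith_val (N L s d : ℕ) (h1 : 2*L = (N+1)*N) (h2 : 2*d + s = L) (h3 : s = (N+1)/2) :
    d = N^2/4 := by
  rcases Nat.even_or_odd N with ⟨a, ha⟩ | ⟨a, ha⟩
  · subst ha
    have e1 : (a+a+1)*(a+a) = 4*(a*a) + 2*a := by ring
    have e2 : (a+a)^2 = 4*(a*a) := by ring
    have key : ∀ A : ℕ, (a+a+1)*(a+a) = 4*A+2*a → (a+a)^2 = 4*A → d = (a+a)^2/4 := by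
      intro A h4 h5
      omega
    exact key (a*a) e1 e2
  · subst ha
    have e1 : (2*a+1+1)*(2*a+1) = 4*(a*a) + 6*a + 2 := by ring
    have e2 : (2*a+1)^2 = 4*(a*a) + 4*a + 1 := by ring
    have key : ∀ A : ℕ, (2*a+1+1)*(2*a+1) = 4*A+6*a+2 → (2*a+1)^2 = 4*A+4*a+1 →
        d = (2*a+1)^2/4 := by
      intro A h4 h5
      omega
    exact key (a*a) e1 e2

/-! ### The candidate -/

def orbitSteps (w : List (Fin n)) : Finset (Fin w.length) :=
  Finset.univ.filter fun k => wc w k = Fin.rev (wb w k)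

def isDone (w : List (Fin n)) (m : ℕ) (x : Fin (n+1)) : Prop :=
  ∃ j : Fin w.length, j.val < m ∧
    ((wb w j = x ∧ wc w j = Fin.rev x) ∨ (wb w j = Fin.rev x ∧ wc w j = x))

open Classical in
noncomputable def thetaFun (w : List (Fin n)) (m : ℕ) (x : Fin (n+1)) : Fin (n+1) :=
  if isDone w m x then x else Fin.rev x

lemma isDone_rev (w : List (Fin n)) (m : ℕ) (x : Fin (n+1)) :
    isDone w m (Fin.rev x) ↔ isDone w m x := by
  unfold isDone
  rw [Fin.rev_rev]
  constructor
  · rintro ⟨j, hj, h | h⟩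
    · exact ⟨j, hj, Or.inr ⟨h.1, h.2⟩⟩
    · exact ⟨j, hj, Or.inl ⟨h.1, h.2⟩⟩
  · rintro ⟨j, hj, h | h⟩
    · exact ⟨j, hj, Or.inr ⟨h.1, h.2⟩⟩
    · exact ⟨j, hj, Or.inl ⟨h.1, h.2⟩⟩

lemma thetaFun_involutive (w : List (Fin n)) (m : ℕ) :
    Function.Involutive (thetaFun w m) := by
  intro x
  unfold thetaFun
  by_cases h : isDone w m x
  · rw [if_pos h, if_pos h]
  · rw [if_neg h, if_neg (fun hc => h ((isDone_rev w m x).1 hc)), Fin.rev_rev]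

noncomputable def theta (w : List (Fin n)) (m : ℕ) : Equiv.Perm (Fin (n+1)) :=
  Function.Involutive.toPerm (thetaFun w m) (thetaFun_involutive w m)

lemma theta_apply (w : List (Fin n)) (m : ℕ) (x : Fin (n+1)) :
    theta w m x = thetaFun w m x := rfl

noncomputable def cand (w : List (Fin n)) : Fin (w.length + 1) → Equiv.Perm (Fin (n+1)) :=
  fun k => theta w k.val * pp w k.val

lemma theta_zero (w : List (Fin n)) : theta w 0 = Fin.revPerm := by
  ext x
  rw [theta_apply, thetaFun, if_neg, Fin.revPerm_apply]
  rintro ⟨j, hj, -⟩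
  omega

section Cand

variable (w : List (Fin n))
  (hw : (w.map cox).prod = (Fin.revPerm : Equiv.Perm (Fin (n+1))))
  (hred : w.length = invCount (Fin.revPerm : Equiv.Perm (Fin (n+1))))

include hw hred in
lemma theta_length : theta w w.length = 1 := by
  ext x
  rw [theta_apply, thetaFun, Equiv.Perm.one_apply]
  rcases lt_trichotomy x (Fin.rev x) with h | h | h
  · obtain ⟨k, hk1, hk2⟩ := wbc_surjective w hw hred x (Fin.rev x) h
    rw [if_pos ⟨k, k.isLt, Or.inl ⟨hk1, hk2⟩⟩]
  · by_cases hd : isDone w w.length x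
    · rw [if_pos hd]
    · rw [if_neg hd, ← h]
  · obtain ⟨k, hk1, hk2⟩ := wbc_surjective w hw hred (Fin.rev x) x h
    rw [if_pos ⟨k, k.isLt, Or.inr ⟨hk1, hk2⟩⟩]

include hw hred in
lemma notDone_wb (k : Fin w.length) (hk : k ∈ orbitSteps w) : ¬ isDone w k.val (wb w k) := by
  rw [orbitSteps, Finset.mem_filter] at hk
  rintro ⟨j, hj, ⟨h1, h2⟩ | ⟨h1, h2⟩⟩
  · rw [← hk.2] at h2
    have : j = k := wbc_injective w hw hred (by rw [Prod.mk.injEq]; exact ⟨h1, h2⟩)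
    omega
  · rw [← hk.2] at h1
    have hlt := wb_lt_wc w hw hred j
    rw [h1, h2] at hlt
    exact absurd (wb_lt_wc w hw hred k) (not_lt.2 hlt.le)

include hw hred in
lemma notDone_wc (k : Fin w.length) (hk : k ∈ orbitSteps w) : ¬ isDone w k.val (wc w k) := by
  have hrev : Fin.rev (wc w k) = wb w k := by
    rw [orbitSteps, Finset.mem_filter] at hk
    rw [hk.2, Fin.rev_rev]
  rintro ⟨j, hj, ⟨h1, h2⟩ | ⟨h1, h2⟩⟩
  · rw [hrev] at h2
    have hlt := wb_lt_wc w hw hred j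
    rw [h1, h2] at hlt
    exact absurd (wb_lt_wc w hw hred k) (not_lt.2 hlt.le)
  · rw [hrev] at h1
    have : j = k := wbc_injective w hw hred (by rw [Prod.mk.injEq]; exact ⟨h1, h2⟩)
    omega

include hw hred in
lemma theta_step_orbit (k : Fin w.length) (hk : k ∈ orbitSteps w) :
    theta w (k.val+1) = theta w k.val * Equiv.swap (wb w k) (wc w k) := by
  have hor : wc w k = Fin.rev (wb w k) := by
    rw [orbitSteps, Finset.mem_filter] at hk; exact hk.2
  have hbc : wb w k < wc w k := wb_lt_wc w hw hred k
  ext x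
  rw [Equiv.Perm.mul_apply, theta_apply, theta_apply]
  by_cases hxb : x = wb w k
  · subst hxb
    rw [Equiv.swap_apply_left]
    rw [thetaFun, if_pos ⟨k, by omega, Or.inl ⟨rfl, hor⟩⟩]
    rw [thetaFun, if_neg (notDone_wc w hw hred k hk), hor, Fin.rev_rev]
  · by_cases hxc : x = wc w k
    · subst hxc
      rw [Equiv.swap_apply_right]
      have h2 : wb w k = Fin.rev (wc w k) := by rw [hor, Fin.rev_rev]
      rw [thetaFun, if_pos ⟨k, by omega, Or.inr ⟨h2, rfl⟩⟩]
      rw [thetaFun, if_neg (notDone_wb w hw hred k hk), ← hor]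
    · rw [Equiv.swap_apply_of_ne_of_ne hxb hxc]
      have hsame : isDone w (k.val+1) x ↔ isDone w k.val x := by
        constructor
        · rintro ⟨j, hj, hcase⟩
          by_cases hjk : j = k
          · subst hjk
            rcases hcase with ⟨h1, h2⟩ | ⟨h1, h2⟩
            · exact absurd h1 (Ne.symm hxb)
            · exact absurd h2 (Ne.symm hxc)
          · have : j.val < k.val := by
              have := Fin.val_ne_of_ne hjk
              omega
            exact ⟨j, this, hcase⟩
        · rintro ⟨j, hj, hcase⟩
          exact ⟨j, by omega, hcase⟩
      rw [thetaFun, thetaFun]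
      by_cases hd : isDone w k.val x
      · rw [if_pos (hsame.2 hd), if_pos hd]
      · rw [if_neg (fun hc => hd (hsame.1 hc)), if_neg hd]

include hw hred in
lemma theta_step_nonorbit (k : Fin w.length) (hk : k ∉ orbitSteps w) :
    theta w (k.val+1) = theta w k.val := by
  have hor : wc w k ≠ Fin.rev (wb w k) := by
    rw [orbitSteps, Finset.mem_filter] at hk
    intro h; exact hk ⟨Finset.mem_univ _, h⟩
  ext x
  rw [theta_apply, theta_apply]
  have hsame : isDone w (k.val+1) x ↔ isDone w k.val x := by
    constructor
    · rintro ⟨j, hj, hcase⟩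
      by_cases hjk : j = k
      · subst hjk
        rcases hcase with ⟨h1, h2⟩ | ⟨h1, h2⟩
        · rw [← h1] at h2; exact absurd h2 hor
        · rw [← h2] at h1
          have : wc w j = Fin.rev (wb w j) := by rw [h1, Fin.rev_rev]
          exact absurd this hor
      · have : j.val < k.val := by
          have := Fin.val_ne_of_ne hjk
          omega
        exact ⟨j, this, hcase⟩
    · rintro ⟨j, hj, hcase⟩
      exact ⟨j, by omega, hcase⟩
  rw [thetaFun, thetaFun]
  by_cases hd : isDone w k.val x
  · rw [if_pos (hsame.2 hd), if_pos hd]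
  · rw [if_neg (fun hc => hd (hsame.1 hc)), if_neg hd]

include hw hred in
lemma cand_step_orbit (k : Fin w.length) (hk : k ∈ orbitSteps w) :
    cand w k.succ = cand w k.castSucc := by
  have h1 : cand w k.succ = theta w (k.val+1) * pp w (k.val+1) := rfl
  have h2 : cand w k.castSucc = theta w k.val * pp w k.val := rfl
  rw [h1, h2, theta_step_orbit w hw hred k hk, pp_succ w k.val k.isLt]
  have hswap : Equiv.swap (wb w k) (wc w k)
      = pp w k.val * cox (w.get ⟨k.val, k.isLt⟩) * (pp w k.val)⁻¹ := by
    rw [wb, wc, cox]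
    exact Equiv.swap_apply_apply (pp w k.val) _ _
  rw [hswap]
  have : w.get ⟨k.val, k.isLt⟩ = w.get k := rfl
  rw [this]
  simp only [mul_assoc]
  rw [inv_mul_cancel_left, cox_mul_cox, mul_one]

include hw hred in
lemma cand_step_nonorbit (k : Fin w.length) (hk : k ∉ orbitSteps w) :
    cand w k.succ = cand w k.castSucc * cox (w.get k) := by
  have h1 : cand w k.succ = theta w (k.val+1) * pp w (k.val+1) := rfl
  have h2 : cand w k.castSucc = theta w k.val * pp w k.val := rfl
  rw [h1, h2, theta_step_nonorbit w hw hred k hk, pp_succ w k.val k.isLt]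
  have : w.get ⟨k.val, k.isLt⟩ = w.get k := rfl
  rw [this, mul_assoc]

include hw hred in
lemma cand_descent (k : Fin w.length) (hk : k ∈ orbitSteps w) :
    cand w k.castSucc ((w.get k).succ) < cand w k.castSucc ((w.get k).castSucc) := by
  have h2 : cand w k.castSucc = theta w k.val * pp w k.val := rfl
  have hbc : wb w k < wc w k := wb_lt_wc w hw hred k
  have hor : wc w k = Fin.rev (wb w k) := by
    rw [orbitSteps, Finset.mem_filter] at hk; exact hk.2
  have hvb : cand w k.castSucc ((w.get k).castSucc) = wc w k := by
    rw [h2, Equiv.Perm.mul_apply]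
    have : pp w k.val ((w.get k).castSucc) = wb w k := rfl
    rw [this, theta_apply, thetaFun, if_neg (notDone_wb w hw hred k hk), ← hor]
  have hvc : cand w k.castSucc ((w.get k).succ) = wb w k := by
    rw [h2, Equiv.Perm.mul_apply]
    have : pp w k.val ((w.get k).succ) = wc w k := rfl
    rw [this, theta_apply, thetaFun, if_neg (notDone_wc w hw hred k hk), hor, Fin.rev_rev]
  rw [hvb, hvc]
  exact hbc

include hw hred in
lemma cand_isPreancestry : IsPreancestry w (cand w) := by
  refine ⟨?_, ?_, ?_, ?_⟩
  · have : cand w 0 = theta w 0 * pp w 0 := by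
      unfold cand
      congr 1 <;> rw [Fin.val_zero]
    rw [this, theta_zero, pp_zero, mul_one]
  · have : cand w (Fin.last w.length) = theta w w.length * pp w w.length := rfl
    rw [this, theta_length w hw hred, pp_length w hw, one_mul]
  · intro k
    by_cases hk : k ∈ orbitSteps w
    · exact Or.inl (cand_step_orbit w hw hred k hk)
    · exact Or.inr (cand_step_nonorbit w hw hred k hk)
  · intro k hlt
    by_cases hk : k ∈ orbitSteps w
    · exfalso
      have hdesc := cand_descent w hw hred k hk
      have := invCount_mul_cox_of_descent hdesc
      omega
    · exact cand_step_nonorbit w hw hred k hk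

include hw hred in
lemma EqS_cand : EqS w (cand w) = orbitSteps w := by
  ext k
  rw [eqS_iff_stay w (cand w) (cand_isPreancestry w hw hred) k]
  constructor
  · intro h
    by_contra hk
    have := cand_step_nonorbit w hw hred k hk
    rw [h] at this
    have h1 : cand w k.castSucc * cox (w.get k) = cand w k.castSucc * 1 := by
      rw [← this, mul_one]
    have hcox : cox (w.get k) = 1 := mul_left_cancel h1
    have := congrArg (fun f => f ((w.get k).castSucc)) hcox
    simp only [cox, Equiv.swap_apply_left, Equiv.Perm.one_apply] at this
    exact absurd this (Fin.castSucc_lt_succ : (w.get k).castSucc < (w.get k).succ).ne'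
  · intro hk
    exact cand_step_orbit w hw hred k hk

include hw hred in
lemma card_orbitSteps : (orbitSteps w).card = (n+1)/2 := by
  rw [← card_OP]
  apply Finset.card_bij (fun k _ => wb w k)
  · intro k hk
    rw [orbitSteps, Finset.mem_filter] at hk
    rw [Finset.mem_filter]
    refine ⟨Finset.mem_univ _, ?_⟩
    rw [← hk.2]
    exact wb_lt_wc w hw hred k
  · intro a ha b hb hab
    rw [orbitSteps, Finset.mem_filter] at ha hb
    apply wbc_injective w hw hred
    rw [Prod.mk.injEq]
    exact ⟨hab, by rw [ha.2, hb.2, hab]⟩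
  · intro j hj
    rw [Finset.mem_filter] at hj
    obtain ⟨k, hk1, hk2⟩ := wbc_surjective w hw hred j (Fin.rev j) hj.2
    refine ⟨k, ?_, hk1⟩
    rw [orbitSteps, Finset.mem_filter]
    exact ⟨Finset.mem_univ _, by rw [hk1, hk2]⟩

include hw hred in
lemma cand_preDim : preDim w (cand w) = n^2/4 := by
  have h1 := dim_formula w (cand w) (cand_isPreancestry w hw hred)
  rw [EqS_cand w hw hred, card_orbitSteps w hw hred] at h1
  have h3 := invCount_revPerm (n := n)
  exact arith_val n w.length ((n+1)/2) (preDim w (cand w)) (by omega) h1 rfl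

end Cand

lemma determination (w : List (Fin n)) (ρ ρ' : Fin (w.length + 1) → Equiv.Perm (Fin (n+1)))
    (hρ : IsPreancestry w ρ) (hρ' : IsPreancestry w ρ')
    (hEq : EqS w ρ = EqS w ρ') : ρ = ρ' := by
  have key : ∀ m (h : m < w.length + 1), ρ ⟨m, h⟩ = ρ' ⟨m, h⟩ := by
    intro m
    induction m with
    | zero =>
      intro h
      have h0 : (⟨0, h⟩ : Fin (w.length+1)) = 0 := by apply Fin.ext; simp
      rw [h0, hρ.1, hρ'.1]
    | succ m ih =>
      intro h
      have hm : m < w.length := by omega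
      set k : Fin w.length := ⟨m, hm⟩ with hkdef
      have hsucc : (⟨m+1, h⟩ : Fin (w.length+1)) = k.succ := by
        apply Fin.ext; simp [hkdef, Fin.val_succ]
      have hcast : k.castSucc = (⟨m, by omega⟩ : Fin (w.length+1)) := by
        apply Fin.ext; simp [hkdef]
      rw [hsucc]
      by_cases hs : k ∈ EqS w ρ
      · have hs' : k ∈ EqS w ρ' := hEq ▸ hs
        rw [(eqS_iff_stay w ρ hρ k).1 hs, (eqS_iff_stay w ρ' hρ' k).1 hs', hcast]
        exact ih _
      · have hs' : k ∉ EqS w ρ' := by rw [← hEq]; exact hs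
        rw [move_of_not_eqS w ρ hρ k hs, move_of_not_eqS w ρ' hρ' k hs', hcast]
        rw [ih _]
  funext k
  exact key k.val k.isLt

end Pre

/-- For `n ≥ 2` and a reduced word `w` of the longest element `η ∈ S_{n+1}`, the largest
possible dimension of a preancestry is `⌊n²/4⌋`, and there is a unique preancestry of this
maximal dimension. -/
theorem max_dim_preancestry_longest (n : ℕ) (hn : 2 ≤ n) (w : List (Fin n))
    (hw : (w.map cox).prod = (Fin.revPerm : Equiv.Perm (Fin (n+1))))
    (hred : w.length = invCount (Fin.revPerm : Equiv.Perm (Fin (n+1)))) :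
    (∀ ρ : Fin (w.length + 1) → Equiv.Perm (Fin (n+1)),
        IsPreancestry w ρ → preDim w ρ ≤ n^2 / 4) ∧
    (∃! ρ : Fin (w.length + 1) → Equiv.Perm (Fin (n+1)),
        IsPreancestry w ρ ∧ preDim w ρ = n^2 / 4) := by
  have h3 := Pre.invCount_revPerm (n := n)
  constructor
  · intro ρ hρ
    have h1 := Pre.dim_formula w ρ hρ
    have h2 := Pre.card_EqS_ge w hw hred ρ hρ
    exact Pre.arith_le n w.length (Pre.EqS w ρ).card _ (by omega) h1 h2
  · refine ⟨Pre.cand w, ⟨Pre.cand_isPreancestry w hw hred, Pre.cand_preDim w hw hred⟩, ?_⟩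
    rintro ρ ⟨hρ, hd⟩
    have h1 := Pre.dim_formula w ρ hρ
    have h2 := Pre.card_EqS_ge w hw hred ρ hρ
    have hs : (Pre.EqS w ρ).card = (n+1)/2 :=
      Pre.arith_eq n w.length _ _ (by omega) h1 h2 hd
    obtain ⟨hpart1, -⟩ := Pre.eq_case w hw hred ρ hρ hs
    have hsub : Pre.EqS w ρ ⊆ Pre.orbitSteps w := by
      intro k hk
      rw [Pre.orbitSteps, Finset.mem_filter]
      exact ⟨Finset.mem_univ _, hpart1 k hk⟩
    have hcard : (Pre.orbitSteps w).card ≤ (Pre.EqS w ρ).card := by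
      rw [Pre.card_orbitSteps w hw hred, hs]
    have hEq : Pre.EqS w ρ = Pre.orbitSteps w := Finset.eq_of_subset_of_card_le hsub hcard
    have hEq' : Pre.EqS w (Pre.cand w) = Pre.orbitSteps w := Pre.EqS_cand w hw hred
    exact Pre.determination w ρ (Pre.cand w) hρ (Pre.cand_isPreancestry w hw hred)
      (hEq.trans hEq'.symm)
end

section
/- Let σ ∈ S_{n+1}, fix a reduced word of length l = inv(σ), and let ε₀ be a preancestry of dimension d with unmarked crossings k₁,…,k_δ (δ = l - 2d), where the unmarked crossing k_j corresponds to the inversion (i_{j,0}, i_{j,1}) ∈ Inv(σ). Then σ equals the product of transpositions (i_{δ,0} i_{δ,1}) ⋯ (i_{1,0} i_{1,1}). Consequently, if c is the number of cycles of σ, then 2d ≤ l + c - n - 1. -/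
/-! ### Auxiliary machinery -/

section Aux

set_option linter.unusedSectionVars false

open Equiv Finset

variable {α : Type*} [DecidableEq α] [Fintype α] [LinearOrder α]

/-- class of `x` in the equivalence generated by the pairs in `L`. -/
def cls : List (α × α) → α → Finset α
  | [], x => {x}
  | (p :: L), x =>
      cls L x ∪ (if p.1 ∈ cls L x ∨ p.2 ∈ cls L x then cls L p.1 ∪ cls L p.2 else ∅)

theorem mem_cls_self (L : List (α × α)) (x : α) : x ∈ cls L x := by
  induction L with
  | nil => simp [cls]
  | cons p L ih => exact Finset.mem_union_left _ ih

theorem cls_eq_of_mem (L : List (α × α)) : ∀ {x y : α}, y ∈ cls L x → cls L y = cls L x := by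
  induction L with
  | nil => intro x y hy; simp only [cls, Finset.mem_singleton] at hy; rw [hy]
  | cons p L ih =>
    intro x y hy
    obtain ⟨a, b⟩ := p
    simp only [cls] at hy ⊢
    have hsub : ∀ {z : α}, a ∈ cls L z ∨ b ∈ cls L z → cls L z ⊆ cls L a ∪ cls L b := by
      rintro z (hz | hz)
      · rw [← ih hz]; exact Finset.subset_union_left
      · rw [← ih hz]; exact Finset.subset_union_right
    rcases Finset.mem_union.1 hy with hy1 | hy2
    · rw [ih hy1]
    · split_ifs at hy2 with hrel
      · have hKy : cls L y = cls L a ∨ cls L y = cls L b := by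
          rcases Finset.mem_union.1 hy2 with h | h
          · exact Or.inl (ih h)
          · exact Or.inr (ih h)
        have hrely : a ∈ cls L y ∨ b ∈ cls L y := by
          rcases hKy with h | h
          · exact Or.inl (h ▸ mem_cls_self L a)
          · exact Or.inr (h ▸ mem_cls_self L b)
        rw [if_pos hrely, if_pos hrel,
          Finset.union_eq_right.2 (hsub hrely), Finset.union_eq_right.2 (hsub hrel)]
      · simp at hy2

theorem mem_cls_symm (L : List (α × α)) {x y : α} (h : y ∈ cls L x) : x ∈ cls L y := by
  rw [cls_eq_of_mem L h]; exact mem_cls_self L x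

theorem prod_swaps_mem_cls (L : List (α × α)) (x : α) :
    (L.map fun p => Equiv.swap p.1 p.2).prod x ∈ cls L x := by
  induction L generalizing x with
  | nil => simp [cls]
  | cons p L ih =>
    obtain ⟨a, b⟩ := p
    simp only [List.map_cons, List.prod_cons, Equiv.Perm.mul_apply, cls]
    set π := (L.map fun p => Equiv.swap p.1 p.2).prod
    have hπ : π x ∈ cls L x := ih x
    rcases eq_or_ne (π x) a with ha | ha
    · have hrel : a ∈ cls L x ∨ b ∈ cls L x := Or.inl (ha ▸ hπ)
      rw [ha, Equiv.swap_apply_left, if_pos hrel]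
      exact Finset.mem_union_right _ (Finset.mem_union_right _ (mem_cls_self L b))
    · rcases eq_or_ne (π x) b with hb | hb
      · have hrel : a ∈ cls L x ∨ b ∈ cls L x := Or.inr (hb ▸ hπ)
        rw [hb, Equiv.swap_apply_right, if_pos hrel]
        exact Finset.mem_union_right _ (Finset.mem_union_left _ (mem_cls_self L a))
      · rw [Equiv.swap_apply_of_ne_of_ne ha hb]
        exact Finset.mem_union_left _ hπ

theorem pow_mem_cls (L : List (α × α)) (x : α) (i : ℕ) :
    ((L.map fun p => Equiv.swap p.1 p.2).prod ^ i) x ∈ cls L x := by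
  induction i with
  | zero => simpa using mem_cls_self L x
  | succ i ih =>
    rw [pow_succ', Equiv.Perm.mul_apply]
    have := prod_swaps_mem_cls L (((L.map fun p => Equiv.swap p.1 p.2).prod ^ i) x)
    rwa [cls_eq_of_mem L ih] at this

theorem sameCycle_mem_cls (L : List (α × α)) {x y : α}
    (h : Equiv.Perm.SameCycle (L.map fun p => Equiv.swap p.1 p.2).prod x y) :
    y ∈ cls L x := by
  obtain ⟨i, -, hi⟩ := h.exists_pow_eq'
  exact hi ▸ pow_mem_cls L x i

/-- set of minima of classes -/
def clsMin (L : List (α × α)) : Finset α :=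
  Finset.univ.filter fun x => ∀ y ∈ cls L x, x ≤ y

theorem card_le_clsMin (L : List (α × α)) :
    Fintype.card α ≤ L.length + (clsMin L).card := by
  induction L with
  | nil =>
    have : clsMin ([] : List (α × α)) = Finset.univ := by
      ext x; simp [clsMin, cls]
    simp [this]
  | cons p L ih =>
    obtain ⟨a, b⟩ := p
    have hne : ∀ z : α, (cls L z).Nonempty := fun z => ⟨z, mem_cls_self L z⟩
    set ma := (cls L a).min' (hne a)
    set mb := (cls L b).min' (hne b)
    set z := max ma mb with hz
    have hsubset : clsMin L \ {z} ⊆ clsMin ((a, b) :: L) := by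
      intro x hx
      rw [Finset.mem_sdiff, Finset.mem_singleton] at hx
      obtain ⟨hx, hxz⟩ := hx
      rw [clsMin, Finset.mem_filter] at hx ⊢
      refine ⟨Finset.mem_univ x, ?_⟩
      intro y hy
      simp only [cls] at hy
      rcases Finset.mem_union.1 hy with hy1 | hy2
      · exact hx.2 y hy1
      · split_ifs at hy2 with hrel
        · rcases hrel with hax | hbx
          · have hKx : cls L x = cls L a := (cls_eq_of_mem L hax).symm
            have hxma : x = ma := by
              apply le_antisymm
              · exact hx.2 _ (hKx ▸ Finset.min'_mem _ (hne a))
              · exact Finset.min'_le _ _ (hKx ▸ mem_cls_self L x)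
            have hmb : x ≤ mb := by
              by_contra hlt
              push_neg at hlt
              exact hxz (by rw [hz, ← hxma]; exact (max_eq_left hlt.le).symm ▸ rfl)
            rcases Finset.mem_union.1 hy2 with hya | hyb
            · exact hx.2 y (hKx ▸ hya)
            · exact le_trans hmb (Finset.min'_le _ _ hyb)
          · have hKx : cls L x = cls L b := (cls_eq_of_mem L hbx).symm
            have hxmb : x = mb := by
              apply le_antisymm
              · exact hx.2 _ (hKx ▸ Finset.min'_mem _ (hne b))
              · exact Finset.min'_le _ _ (hKx ▸ mem_cls_self L x)
            have hma : x ≤ ma := by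
              by_contra hlt
              push_neg at hlt
              exact hxz (by rw [hz, ← hxmb]; exact (max_eq_right hlt.le).symm ▸ rfl)
            rcases Finset.mem_union.1 hy2 with hya | hyb
            · exact le_trans hma (Finset.min'_le _ _ hya)
            · exact hx.2 y (hKx ▸ hyb)
        · simp at hy2
    have hcard : (clsMin L).card ≤ (clsMin ((a, b) :: L)).card + 1 := by
      have h1 : clsMin L ⊆ (clsMin L \ {z}) ∪ {z} := by
        intro x hx
        rcases eq_or_ne x z with rfl | hxz
        · exact Finset.mem_union_right _ (Finset.mem_singleton_self z)
        · exact Finset.mem_union_left _ (Finset.mem_sdiff.2 ⟨hx, by simpa using hxz⟩)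
      calc (clsMin L).card ≤ ((clsMin L \ {z}) ∪ {z}).card := Finset.card_le_card h1
        _ ≤ (clsMin L \ {z}).card + 1 := by
            exact le_trans (Finset.card_union_le _ _) (by simp)
        _ ≤ (clsMin ((a, b) :: L)).card + 1 := by
            exact Nat.add_le_add_right (Finset.card_le_card hsubset) 1
    calc Fintype.card α ≤ L.length + (clsMin L).card := ih
      _ ≤ L.length + ((clsMin ((a, b) :: L)).card + 1) := Nat.add_le_add_left hcard _
      _ = ((a, b) :: L).length + (clsMin ((a, b) :: L)).card := by simp; ring

theorem clsMin_card_le (L : List (α × α)) :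
    (clsMin L).card ≤ ((L.map fun p => Equiv.swap p.1 p.2).prod).cycleFactorsFinset.card
      + (Finset.univ.filter fun x => (L.map fun p => Equiv.swap p.1 p.2).prod x = x).card := by
  set σ := (L.map fun p => Equiv.swap p.1 p.2).prod with hσ
  set t := σ.cycleFactorsFinset.disjSum (Finset.univ.filter fun x => σ x = x) with ht
  have := Finset.card_le_card_of_injOn
    (f := fun x => if σ x = x then Sum.inr x else Sum.inl (σ.cycleOf x))
    (s := clsMin L) (t := t) ?_ ?_
  · simpa [ht, Finset.card_disjSum] using this
  · intro x hx
    by_cases hfix : σ x = x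
    · simp only [if_pos hfix, ht, Finset.mem_coe, Finset.inr_mem_disjSum, Finset.mem_filter]
      exact ⟨Finset.mem_univ x, hfix⟩
    · simp only [if_neg hfix, ht, Finset.mem_coe, Finset.inl_mem_disjSum]
      exact Equiv.Perm.cycleOf_mem_cycleFactorsFinset_iff.2 (Equiv.Perm.mem_support.2 hfix)
  · intro x hx y hy hxy
    by_cases hfx : σ x = x <;> by_cases hfy : σ y = y <;>
      simp only [if_pos, if_neg, hfx, hfy, ite_true, ite_false] at hxy
    · exact Sum.inr.inj hxy
    · exact absurd hxy (by simp)
    · exact absurd hxy (by simp)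
    · have hcyc : σ.cycleOf x = σ.cycleOf y := Sum.inl.inj hxy
      have hsc : σ.SameCycle x y := by
        have hy' : y ∈ (σ.cycleOf y).support := by
          rw [Equiv.Perm.mem_support_cycleOf_iff]
          exact ⟨Equiv.Perm.SameCycle.refl _ _, Equiv.Perm.mem_support.2 hfy⟩
        rw [← hcyc, Equiv.Perm.mem_support_cycleOf_iff] at hy'
        exact hy'.1
      have h1 : y ∈ cls L x := sameCycle_mem_cls L hsc
      have h2 : x ∈ cls L y := mem_cls_symm L h1
      simp only [clsMin, Finset.coe_filter, Set.mem_setOf_eq] at hx hy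
      exact le_antisymm (hx.2 y h1) (hy.2 x h2)

/-- The main bound: a permutation that is the product of the swaps of the pairs of `L`
satisfies `card α ≤ L.length + #cycles + #fixed points`. -/
theorem swap_length_bound (L : List (α × α)) (σ : Equiv.Perm α)
    (hσ : (L.map fun p => Equiv.swap p.1 p.2).prod = σ) :
    Fintype.card α ≤ L.length + (σ.cycleFactorsFinset.card
      + (Finset.univ.filter fun x => σ x = x).card) := by
  subst hσ
  calc Fintype.card α ≤ L.length + (clsMin L).card := card_le_clsMin L
    _ ≤ L.length + _ := Nat.add_le_add_left (clsMin_card_le L) _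

end Aux

section Aux2

open Equiv Finset

theorem prod_filter_map_eq {β M : Type*} [Monoid M] (L : List β) (p : β → Bool) (f : β → M) :
    ((L.filter p).map f).prod = (L.map fun k => if p k then f k else 1).prod := by
  induction L with
  | nil => rfl
  | cons a L ih =>
    rw [List.filter_cons, List.map_cons, List.prod_cons]
    by_cases h : p a
    · simp only [h, if_true, List.map_cons, List.prod_cons, ih]
    · simp only [h, Bool.false_eq_true, if_false, ih, one_mul]

theorem swap_sort {n : ℕ} (i : Fin n) {p1 p2 : Fin (n+1)} (h12 : p1 < p2)
    (hq : ¬(p1 = i.castSucc ∧ p2 = i.succ)) :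
    cox i p1 < cox i p2 ∧ ¬(cox i p1 = i.castSucc ∧ cox i p2 = i.succ) := by
  simp only [cox, Equiv.swap_apply_def]
  have hcs : (i.castSucc : ℕ) = i := rfl
  have hs : (i.succ : ℕ) = i + 1 := rfl
  split_ifs with h1 h2 h3 h4 h5 h6 <;>
    simp only [Fin.ext_iff, Fin.lt_def, hcs, hs, not_and] at * <;> omega

theorem invCount_cox (n : ℕ) (σ : Equiv.Perm (Fin (n+1))) (i : Fin n) :
    invCount (σ * cox i) = invCount σ + 1 ∨ invCount σ = invCount (σ * cox i) + 1 := by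
  classical
  set q0 : Fin (n+1) × Fin (n+1) := (i.castSucc, i.succ) with hq0
  set S : Equiv.Perm (Fin (n+1)) → Finset (Fin (n+1) × Fin (n+1)) :=
    fun τ => Finset.univ.filter fun p => p.1 < p.2 ∧ τ p.2 < τ p.1 with hS
  have hicard : ∀ τ, invCount τ = (S τ).card := fun τ => rfl
  have hmemq0 : ∀ p : Fin (n+1) × Fin (n+1), p = q0 ↔ (p.1 = i.castSucc ∧ p.2 = i.succ) := by
    intro p; rw [hq0, Prod.ext_iff]
  have key : ((S (σ * cox i)).erase q0).card = ((S σ).erase q0).card := by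
    apply Finset.card_bij' (i := fun p _ => (cox i p.1, cox i p.2))
      (j := fun p _ => (cox i p.1, cox i p.2))
    · intro p hp
      rw [Finset.mem_erase, hS, Finset.mem_filter] at hp
      obtain ⟨hpq, -, h12, hlt⟩ := hp
      obtain ⟨hsort, hne⟩ := swap_sort i h12 (fun h => hpq ((hmemq0 p).2 h))
      rw [Finset.mem_erase, hS, Finset.mem_filter]
      refine ⟨fun h => hne ((hmemq0 _).1 h), Finset.mem_univ _, hsort, ?_⟩
      simpa [cox, Equiv.Perm.mul_apply] using hlt
    · intro p hp
      rw [Finset.mem_erase, hS, Finset.mem_filter] at hp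
      obtain ⟨hpq, -, h12, hlt⟩ := hp
      obtain ⟨hsort, hne⟩ := swap_sort i h12 (fun h => hpq ((hmemq0 p).2 h))
      rw [Finset.mem_erase, hS, Finset.mem_filter]
      refine ⟨fun h => hne ((hmemq0 _).1 h), Finset.mem_univ _, hsort, ?_⟩
      simp only [Equiv.Perm.mul_apply]
      have hinv : ∀ x, cox i (cox i x) = x := fun x => Equiv.swap_apply_self _ _ x
      rwa [hinv, hinv]
    · intro p hp; simp [cox, Equiv.swap_apply_self]
    · intro p hp; simp [cox, Equiv.swap_apply_self]
  have hcs : i.castSucc < i.succ := by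
    rw [Fin.lt_def]; simp [Fin.coe_castSucc, Fin.val_succ]
  have hq0S : q0 ∈ S σ ↔ σ i.succ < σ i.castSucc := by
    simp [hS, hq0, hcs]
  have hq0S' : q0 ∈ S (σ * cox i) ↔ σ i.castSucc < σ i.succ := by
    simp only [hS, hq0, Finset.mem_filter]
    simp [hS, hq0, hcs, cox, Equiv.Perm.mul_apply, Equiv.swap_apply_left, Equiv.swap_apply_right]
  have htri : σ i.castSucc ≠ σ i.succ := by
    intro h
    exact absurd (σ.injective h) (Fin.ne_of_lt hcs)
  rcases lt_or_gt_of_ne htri with hlt | hgt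
  · left
    rw [hicard, hicard, ← Finset.card_erase_add_one (hq0S'.2 hlt), key,
      Finset.erase_eq_of_notMem (fun h => absurd (hq0S.1 h) (not_lt.2 hlt.le))]
  · right
    rw [hicard (σ * cox i), hicard, ← Finset.card_erase_add_one (hq0S.2 hgt), ← key,
      Finset.erase_eq_of_notMem (fun h => absurd (hq0S'.1 h) (not_lt.2 hgt.le))]

end Aux2

section Aux3

open Equiv Finset

/-- Part 1: the product of the transpositions of the unmarked crossings in decreasing
order is the full word product. -/
theorem preancestry_prod {n : ℕ} (w : List (Fin n))
    (ρ : Fin (w.length + 1) → Equiv.Perm (Fin (n+1)))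
    (hρ : IsPreancestry w ρ) :
    (w.map cox).prod = ((((List.finRange w.length).filter
            (fun k => decide (ρ k.succ = ρ k.castSucc))).reverse).map
          (fun k : Fin w.length => ((w.take (k : ℕ)).map cox).prod * cox (w.get k) *
            (((w.take (k : ℕ)).map cox).prod)⁻¹)).prod := by
  classical
  set π : ℕ → Equiv.Perm (Fin (n+1)) := fun m => ((w.take m).map cox).prod with hπ
  set p : Fin w.length → Bool := fun k => decide (ρ k.succ = ρ k.castSucc) with hp
  set f : Fin w.length → Equiv.Perm (Fin (n+1)) :=
    fun k => π (k : ℕ) * cox (w.get k) * (π (k : ℕ))⁻¹ with hf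
  set c' : ℕ → Equiv.Perm (Fin (n+1)) :=
    fun m => if h : m < w.length then (if p ⟨m, h⟩ then f ⟨m, h⟩ else 1) else 1 with hc'
  have step1 : (((List.finRange w.length).filter p).reverse.map f).prod
      = ((List.range w.length).reverse.map c').prod := by
    rw [← List.filter_reverse, prod_filter_map_eq]
    have h2 : ((List.finRange w.length).reverse.map fun k => if p k then f k else 1)
        = (List.finRange w.length).reverse.map (c' ∘ Fin.val) := by
      apply List.map_congr_left
      intro k _
      simp only [Function.comp_apply, hc', k.isLt, dif_pos, Fin.eta]
    rw [h2, ← List.map_map]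
    have h3 : (List.finRange w.length).reverse.map Fin.val = (List.range w.length).reverse := by
      simp [List.map_reverse, List.map_coe_finRange_eq_range]
    rw [h3]
  rw [step1]
  have main : ∀ m, ∀ hm : m ≤ w.length, ((List.range m).reverse.map c').prod
      = π m * (ρ ⟨m, by omega⟩)⁻¹ * Fin.revPerm := by
    intro m
    induction m with
    | zero =>
      intro hm
      have h0 : ρ ⟨0, by omega⟩ = Fin.revPerm := hρ.1
      rw [h0]
      simp [hπ]
    | succ m ih =>
      intro hm
      have hm' : m < w.length := by omega
      have hrec := ih (by omega)
      rw [List.range_succ, List.reverse_append, List.map_append, List.prod_append]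
      simp only [List.reverse_singleton, List.map_cons, List.map_nil, List.prod_cons,
        List.prod_nil, mul_one]
      rw [hrec]
      set k : Fin w.length := ⟨m, hm'⟩ with hk
      have hcast : k.castSucc = ⟨m, by omega⟩ := rfl
      have hsucc : k.succ = ⟨m + 1, by omega⟩ := rfl
      have hπs : π (m + 1) = π m * cox (w.get k) := by
        simp only [hπ]
        rw [← List.take_concat_get' w m (by omega), List.map_append, List.prod_append]
        simp [hk]
      by_cases hA : ρ k.succ = ρ k.castSucc
      · have hpk : p k = true := by simp [hp, hA]
        have hcm : c' m = f k := by
          simp only [hc', dif_pos hm']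
          rw [← hk, if_pos hpk]
        rw [hcm, hf]
        simp only
        rw [hπs, ← hcast, ← hsucc, hA]
        rw [show (k : ℕ) = m from rfl]
        group
      · have hB : ρ k.succ = ρ k.castSucc * cox (w.get k) := (hρ.2.2.1 k).resolve_left hA
        have hpk : p k = false := by simp [hp, hA]
        have hcm : c' m = 1 := by
          simp only [hc', dif_pos hm']
          rw [← hk, hpk]
          simp
        rw [hcm, one_mul, hπs, ← hcast, ← hsucc, hB]
        rw [mul_inv_rev]
        group
  have hfin := main w.length le_rfl
  rw [hfin]
  have hlast : ρ ⟨w.length, by omega⟩ = Fin.revPerm := by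
    have h4 := hρ.2.1
    rwa [show Fin.last w.length = ⟨w.length, by omega⟩ from rfl] at h4
  rw [hlast, hπ]
  simp

/-- Part 2 counting: the number of unmarked crossings is `l - 2d`. -/
theorem preancestry_counts {n : ℕ} (w : List (Fin n))
    (ρ : Fin (w.length + 1) → Equiv.Perm (Fin (n+1)))
    (hρ : IsPreancestry w ρ) :
    (Finset.univ.filter fun k : Fin w.length => ρ k.succ = ρ k.castSucc).card
      + 2 * preDim w ρ = w.length := by
  classical
  set g : Fin w.length → ℤ :=
    fun k => (invCount (ρ k.succ) : ℤ) - (invCount (ρ k.castSucc) : ℤ) with hg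
  set F : ℕ → ℤ := fun i => if h : i < w.length + 1 then (invCount (ρ ⟨i, h⟩) : ℤ) else 0
    with hF
  have htele : ∑ k : Fin w.length, g k = 0 := by
    have h1 : ∀ k : Fin w.length, g k = F ((k : ℕ) + 1) - F (k : ℕ) := by
      intro k
      have hk1 : (k : ℕ) + 1 < w.length + 1 := by omega
      have hk0 : (k : ℕ) < w.length + 1 := by omega
      simp only [hg, hF, dif_pos hk1, dif_pos hk0]
      congr 2
    calc ∑ k : Fin w.length, g k = ∑ k : Fin w.length, (F ((k : ℕ) + 1) - F (k : ℕ)) :=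
          Finset.sum_congr rfl fun k _ => h1 k
      _ = ∑ i ∈ Finset.range w.length, (F (i + 1) - F i) :=
          Fin.sum_univ_eq_sum_range (fun i => F (i + 1) - F i) w.length
      _ = F w.length - F 0 := Finset.sum_range_sub F w.length
      _ = 0 := by
          have e1 : F w.length = invCount (Fin.revPerm (n := n + 1)) := by
            simp only [hF, dif_pos (by omega : w.length < w.length + 1)]
            rw [show (⟨w.length, by omega⟩ : Fin (w.length + 1)) = Fin.last w.length from rfl,
              hρ.2.1]
          have e2 : F 0 = invCount (Fin.revPerm (n := n + 1)) := by
            simp only [hF, dif_pos (by omega : 0 < w.length + 1)]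
            rw [show (⟨0, by omega⟩ : Fin (w.length + 1)) = 0 from rfl, hρ.1]
          rw [e1, e2, sub_self]
  have hclass : ∀ k : Fin w.length, ¬ (ρ k.succ = ρ k.castSucc) →
      (invCount (ρ k.succ) = invCount (ρ k.castSucc) + 1 ∨
       invCount (ρ k.castSucc) = invCount (ρ k.succ) + 1) := by
    intro k hA
    have hB : ρ k.succ = ρ k.castSucc * cox (w.get k) := (hρ.2.2.1 k).resolve_left hA
    rcases invCount_cox n (ρ k.castSucc) (w.get k) with h | h
    · left; rw [hB]; exact h
    · right; rw [hB]; exact h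
  have hsplit1 := Finset.sum_filter_add_sum_filter_not Finset.univ
    (fun k : Fin w.length => ρ k.succ = ρ k.castSucc) g
  have hsplit2 := Finset.sum_filter_add_sum_filter_not
    (Finset.univ.filter (fun k : Fin w.length => ¬ ρ k.succ = ρ k.castSucc))
    (fun k => invCount (ρ k.succ) < invCount (ρ k.castSucc)) g
  have hAzero : ∑ k ∈ Finset.univ.filter (fun k : Fin w.length => ρ k.succ = ρ k.castSucc), g k
      = 0 := by
    apply Finset.sum_eq_zero
    intro k hk
    rw [Finset.mem_filter] at hk
    simp only [hg]
    rw [hk.2, sub_self]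
  have hDsum : ∑ k ∈ (Finset.univ.filter (fun k : Fin w.length => ¬ ρ k.succ = ρ k.castSucc)).filter
        (fun k => invCount (ρ k.succ) < invCount (ρ k.castSucc)), g k
      = - ((Finset.univ.filter (fun k : Fin w.length => ¬ ρ k.succ = ρ k.castSucc)).filter
        (fun k => invCount (ρ k.succ) < invCount (ρ k.castSucc))).card := by
    rw [Finset.sum_congr rfl (g := fun _ => (-1 : ℤ)) ?_]
    · simp [mul_comm]
    · intro k hk
      simp only [Finset.mem_filter] at hk
      obtain ⟨⟨-, hnA⟩, hDk⟩ := hk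
      rcases hclass k hnA with h | h
      · exfalso; omega
      · simp only [hg]; omega
  have hUsum : ∑ k ∈ (Finset.univ.filter (fun k : Fin w.length => ¬ ρ k.succ = ρ k.castSucc)).filter
        (fun k => ¬ invCount (ρ k.succ) < invCount (ρ k.castSucc)), g k
      = ((Finset.univ.filter (fun k : Fin w.length => ¬ ρ k.succ = ρ k.castSucc)).filter
        (fun k => ¬ invCount (ρ k.succ) < invCount (ρ k.castSucc))).card := by
    rw [Finset.sum_congr rfl (g := fun _ => (1 : ℤ)) ?_]
    · simp
    · intro k hk
      simp only [Finset.mem_filter] at hk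
      obtain ⟨⟨-, hnA⟩, hDk⟩ := hk
      rcases hclass k hnA with h | h
      · simp only [hg]; omega
      · exfalso; omega
  have hDfilter : (Finset.univ.filter (fun k : Fin w.length => ¬ ρ k.succ = ρ k.castSucc)).filter
        (fun k => invCount (ρ k.succ) < invCount (ρ k.castSucc))
      = Finset.univ.filter (fun k : Fin w.length =>
          invCount (ρ k.succ) < invCount (ρ k.castSucc)) := by
    rw [Finset.filter_filter]
    apply Finset.filter_congr
    intro k _
    constructor
    · rintro ⟨-, h⟩; exact h
    · intro h
      refine ⟨?_, h⟩
      intro hAk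
      rw [hAk] at h
      omega
  rw [← hsplit1, ← hsplit2, hAzero, hDsum, hUsum, zero_add] at htele
  have htotal1 : (Finset.univ.filter (fun k : Fin w.length => ρ k.succ = ρ k.castSucc)).card
      + (Finset.univ.filter (fun k : Fin w.length => ¬ ρ k.succ = ρ k.castSucc)).card
      = w.length := by
    rw [Finset.card_filter_add_card_filter_not]
    simp
  have htotal2 := Finset.card_filter_add_card_filter_not
    (s := Finset.univ.filter (fun k : Fin w.length => ¬ ρ k.succ = ρ k.castSucc))
    (p := fun k => invCount (ρ k.succ) < invCount (ρ k.castSucc))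
  rw [hDfilter] at htele htotal2
  simp only [preDim]
  omega

end Aux3

/-- For a preancestry `ε₀` of dimension `d` of a reduced word `w` for `σ`, the product of
the transpositions corresponding to the unmarked crossings, taken in decreasing order,
equals `σ`; consequently `2d ≤ l + c - n - 1` where `c` is the number of cycles of `σ`.
Here the transposition of the crossing at position `k` is the conjugate
`π_{k-1} a_{i_k} π_{k-1}⁻¹` of `a_{i_k}` by the prefix `π_{k-1} = a_{i₁}⋯a_{i_{k-1}}`,
i.e. the transposition exchanging the pair of wires that cross there, which is an
inversion of `σ`. -/
theorem unmarked_crossings_product (n c d : ℕ) (σ : Equiv.Perm (Fin (n+1)))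
    (w : List (Fin n))
    (hw : (w.map cox).prod = σ)
    (hred : w.length = invCount σ)
    (hc : c = σ.cycleType.card + (Finset.univ.filter fun x => σ x = x).card)
    (ρ : Fin (w.length + 1) → Equiv.Perm (Fin (n+1)))
    (hρ : IsPreancestry w ρ)
    (hd : d = preDim w ρ) :
    σ = ((((List.finRange w.length).filter
            (fun k => decide (ρ k.succ = ρ k.castSucc))).reverse).map
          (fun k : Fin w.length => ((w.take (k : ℕ)).map cox).prod * cox (w.get k) *
            (((w.take (k : ℕ)).map cox).prod)⁻¹)).prod ∧
    2 * d + (n + 1) ≤ w.length + c := by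
  have hprod : σ = ((((List.finRange w.length).filter
            (fun k => decide (ρ k.succ = ρ k.castSucc))).reverse).map
          (fun k : Fin w.length => ((w.take (k : ℕ)).map cox).prod * cox (w.get k) *
            (((w.take (k : ℕ)).map cox).prod)⁻¹)).prod := by
    rw [← hw]
    exact preancestry_prod w ρ hρ
  refine ⟨hprod, ?_⟩
  -- list of unmarked crossings
  set T : List (Fin w.length) := (List.finRange w.length).filter
    (fun k => decide (ρ k.succ = ρ k.castSucc)) with hT
  -- its length equals the cardinality of the unmarked set
  have hlen : T.length =
      (Finset.univ.filter fun k : Fin w.length => ρ k.succ = ρ k.castSucc).card := rfl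
  -- pairs of wires
  set P : List (Fin (n+1) × Fin (n+1)) := T.reverse.map
    (fun k : Fin w.length => (((w.take (k : ℕ)).map cox).prod ((w.get k).castSucc),
      ((w.take (k : ℕ)).map cox).prod ((w.get k).succ))) with hP
  have hPswap : (P.map fun p => Equiv.swap p.1 p.2).prod = σ := by
    rw [hP, List.map_map, hprod]
    congr 1
    apply List.map_congr_left
    intro k _
    simp only [Function.comp_apply, cox]
    exact Equiv.swap_apply_apply ((w.take (k : ℕ)).map cox).prod ((w.get k).castSucc)
      ((w.get k).succ)
  have hbound := swap_length_bound P σ hPswap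
  have hPlen : P.length = T.length := by simp [hP]
  have hcyc : Multiset.card σ.cycleType = σ.cycleFactorsFinset.card := by
    rw [Equiv.Perm.cycleType_def]
    exact Multiset.card_map _ _
  have hcounts := preancestry_counts w ρ hρ
  rw [Fintype.card_fin] at hbound
  omega
end

section
/- Let Lo¹_{n+1} be the group of real lower triangular (n+1)×(n+1) matrices with all diagonal entries 1, and for σ ∈ S_{n+1} let Lo_σ = {L ∈ Lo¹_{n+1} : for all i > j, L_{ij} ≠ 0 implies (j,i) ∈ Inv(σ)}. Then Lo_σ is a subgroup of Lo¹_{n+1}. -/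
/-- The set of unipotent lower triangular real matrices. -/
def Lo1 (m : ℕ) : Set (Matrix (Fin m) (Fin m) ℝ) :=
  {L | (∀ i, L i i = 1) ∧ ∀ i j : Fin m, i < j → L i j = 0}

/-- `Lo_σ`: unipotent lower triangular matrices whose nonzero subdiagonal entries `L i j`
(`j < i`) only occur at inversions `(j,i) ∈ Inv(σ)`, i.e. `σ i < σ j`. -/
def LoSet (m : ℕ) (σ : Equiv.Perm (Fin m)) : Set (Matrix (Fin m) (Fin m) ℝ) :=
  {L | L ∈ Lo1 m ∧ ∀ i j : Fin m, j < i → L i j ≠ 0 → σ i < σ j}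

section Aux

variable {m : ℕ} (σ : Equiv.Perm (Fin m))

lemma aux_exists_entry {A B : Matrix (Fin m) (Fin m) ℝ} {i j : Fin m}
    (h : (A * B) i j ≠ 0) : ∃ k, A i k ≠ 0 ∧ B k j ≠ 0 := by
  rw [Matrix.mul_apply] at h
  obtain ⟨k, _, hk⟩ := Finset.exists_ne_zero_of_sum_ne_zero h
  exact ⟨k, fun h' => hk (by simp [h']), fun h' => hk (by simp [h'])⟩

/-- "Good" strictly lower triangular matrices supported on inversions. -/
def Good (N : Matrix (Fin m) (Fin m) ℝ) : Prop :=
  ∀ i j, N i j ≠ 0 → j < i ∧ σ i < σ j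

lemma good_mul {A B : Matrix (Fin m) (Fin m) ℝ} (hA : Good σ A) (hB : Good σ B) :
    Good σ (A * B) := by
  intro i j h
  obtain ⟨k, h1, h2⟩ := aux_exists_entry h
  obtain ⟨hk1, hk2⟩ := hA i k h1
  obtain ⟨hk3, hk4⟩ := hB k j h2
  exact ⟨hk3.trans hk1, hk2.trans hk4⟩

lemma good_pow {N : Matrix (Fin m) (Fin m) ℝ} (hN : Good σ N) (k : ℕ) :
    Good σ (N ^ (k + 1)) := by
  induction k with
  | zero => simpa using hN
  | succ k ih => rw [pow_succ]; exact good_mul σ ih hN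

lemma pow_bound {N : Matrix (Fin m) (Fin m) ℝ} (hN : ∀ i j, N i j ≠ 0 → j < i) :
    ∀ k (i j : Fin m), (N ^ k) i j ≠ 0 → (j : ℕ) + k ≤ (i : ℕ) := by
  intro k
  induction k with
  | zero =>
    intro i j h
    simp only [pow_zero] at h
    have : i = j := by
      by_contra hij
      exact h (Matrix.one_apply_ne hij)
    simp [this]
  | succ k ih =>
    intro i j h
    rw [pow_succ] at h
    obtain ⟨l, h1, h2⟩ := aux_exists_entry h
    have hb := ih i l h1
    have hl : j < l := hN l j h2
    omega

end Aux

/-- `Lo_σ` is a subgroup of the group `Lo¹_{n+1}` of unipotent lower triangular matrices: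
it contains the identity and is closed under multiplication and inverses. -/
theorem LoSet_is_subgroup (n : ℕ) (σ : Equiv.Perm (Fin (n+1))) :
    (1 : Matrix (Fin (n+1)) (Fin (n+1)) ℝ) ∈ LoSet (n+1) σ ∧
    (∀ L₁ ∈ LoSet (n+1) σ, ∀ L₂ ∈ LoSet (n+1) σ, L₁ * L₂ ∈ LoSet (n+1) σ) ∧
    (∀ L ∈ LoSet (n+1) σ, ∃ L' ∈ LoSet (n+1) σ, L * L' = 1 ∧ L' * L = 1) := by
  refine ⟨⟨⟨fun i => Matrix.one_apply_eq i, fun i j hij => Matrix.one_apply_ne hij.ne⟩,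
    fun i j hij h => absurd (Matrix.one_apply_ne hij.ne') h⟩, ?_, ?_⟩
  · -- multiplication
    rintro L₁ ⟨⟨hd₁, hl₁⟩, hs₁⟩ L₂ ⟨⟨hd₂, hl₂⟩, hs₂⟩
    refine ⟨⟨fun i => ?_, fun i j hij => ?_⟩, fun i j hij h => ?_⟩
    · rw [Matrix.mul_apply]
      rw [Finset.sum_eq_single i]
      · rw [hd₁ i, hd₂ i]; ring
      · intro k _ hk
        rcases lt_or_gt_of_ne hk with h | h
        · rw [hl₂ k i h, mul_zero]
        · rw [hl₁ i k h, zero_mul]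
      · simp
    · rw [Matrix.mul_apply]
      apply Finset.sum_eq_zero
      intro k _
      rcases lt_or_ge (k : Fin (n+1)) j with h | h
      · rw [hl₂ k j h, mul_zero]
      · rw [hl₁ i k (lt_of_lt_of_le hij h), zero_mul]
    · obtain ⟨k, h1, h2⟩ := aux_exists_entry h
      have hki : k ≤ i := by
        by_contra hc; exact h1 (hl₁ i k (lt_of_not_ge hc))
      have hjk : j ≤ k := by
        by_contra hc; exact h2 (hl₂ k j (lt_of_not_ge hc))
      rcases eq_or_lt_of_le hki with rfl | hki
      · exact hs₂ k j hij h2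
      rcases eq_or_lt_of_le hjk with rfl | hjk
      · exact hs₁ i j hij h1
      · exact (hs₁ i k hki h1).trans (hs₂ k j hjk h2)
  · -- inverses
    rintro L ⟨⟨hd, hl⟩, hs⟩
    set N : Matrix (Fin (n+1)) (Fin (n+1)) ℝ := 1 - L with hN
    have hLN : L = 1 - N := by rw [hN, sub_sub_cancel]
    have hgood : Good σ N := by
      intro i j h
      have hij : ¬ (i < j) := fun hij => h (by simp [hN, Matrix.one_apply_ne hij.ne, hl i j hij])
      have hne : i ≠ j := fun he => h (by simp [hN, he, Matrix.one_apply_eq, hd j])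
      have hji : j < i := lt_of_le_of_ne (not_lt.mp hij) (Ne.symm hne)
      have hLne : L i j ≠ 0 := fun h0 => h (by simp [hN, Matrix.one_apply_ne hne, h0])
      exact ⟨hji, hs i j hji hLne⟩
    have hslt : ∀ i j, N i j ≠ 0 → j < i := fun i j h => (hgood i j h).1
    have hNnil : N ^ (n + 1) = 0 := by
      ext i j
      by_contra h
      have := pow_bound hslt (n+1) i j h
      omega
    set L' : Matrix (Fin (n+1)) (Fin (n+1)) ℝ := ∑ k ∈ Finset.range (n+1), N ^ k with hL'
    have hmul1 : L * L' = 1 := by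
      rw [hLN, hL', sub_mul, one_mul]
      rw [Finset.mul_sum]
      have : ∑ k ∈ Finset.range (n+1), N * N ^ k
          = ∑ k ∈ Finset.range (n+1), N ^ (k+1) := by
        apply Finset.sum_congr rfl
        intro k _
        rw [pow_succ']
      rw [this]
      rw [Finset.sum_range_succ' (fun k => N ^ k), Finset.sum_range_succ (fun k => N ^ (k+1))]
      simp [hNnil]
    have hmul2 : L' * L = 1 := by
      rw [hLN, hL', mul_sub, mul_one]
      rw [Finset.sum_mul]
      have : ∑ k ∈ Finset.range (n+1), N ^ k * N
          = ∑ k ∈ Finset.range (n+1), N ^ (k+1) := by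
        apply Finset.sum_congr rfl
        intro k _
        rw [pow_succ]
      rw [this]
      rw [Finset.sum_range_succ' (fun k => N ^ k), Finset.sum_range_succ (fun k => N ^ (k+1))]
      simp [hNnil]
    refine ⟨L', ⟨⟨fun i => ?_, fun i j hij => ?_⟩, fun i j hij h => ?_⟩, hmul1, hmul2⟩
    · rw [hL', Matrix.sum_apply]
      rw [Finset.sum_eq_single 0]
      · simp
      · intro k _ hk
        by_contra hne
        have := pow_bound hslt k i i hne
        omega
      · simp
    · rw [hL', Matrix.sum_apply]
      apply Finset.sum_eq_zero
      intro k _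
      by_contra hne
      have := pow_bound hslt k i j hne
      have : (i : ℕ) < (j : ℕ) := hij
      omega
    · rw [hL', Matrix.sum_apply] at h
      obtain ⟨k, _, hk⟩ := Finset.exists_ne_zero_of_sum_ne_zero h
      match k with
      | 0 => exact absurd (Matrix.one_apply_ne hij.ne') (by simpa using hk)
      | (k+1) => exact (good_pow σ hgood k i j hk).2
end
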